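/- arXiv:0801.3714 — 3 statements merged into one kernel-verified Lean document; each statement's English description precedes it below -/
import Mathlib

section
/- If G is a bridgeless cubic graph, then for every edge e of G there is a perfect matching F of G with e ∉ F. -/
/-! Multigraphs: vertex type `V`, edge type `E`, incidence map `ends : E → Sym2 V`. -/

namespace Mg

variable {V E : Type}

/-- No loops: no edge has equal endpoints. -/
def NoLoops (ends : E → Sym2 V) : Prop := ∀ e, ¬ (ends e).IsDiag

/-- Cubic: every vertex is incident with exactly three edges. -/
def IsCubic (ends : E → Sym2 V) : Prop := ∀ v, {e | v ∈ ends e}.ncard = 3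

/-- Reachability using only edges in `F`. -/
def Reach (ends : E → Sym2 V) (F : Set E) : V → V → Prop :=
  Relation.ReflTransGen (fun a b => ∃ e ∈ F, ends e = s(a, b))

/-- Connected. -/
def Connected (ends : E → Sym2 V) : Prop := ∀ v w, Reach ends Set.univ v w

/-- Bridgeless: the endpoints of each edge remain joined after its removal. -/
def Bridgeless (ends : E → Sym2 V) : Prop :=
  ∀ e v w, ends e = s(v, w) → Reach ends {f | f ≠ e} v w

/-- A 2-factor: every vertex is incident with exactly two edges of `F`. -/
def IsTwoFactor (ends : E → Sym2 V) (F : Set E) : Prop :=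
  ∀ v, {e | e ∈ F ∧ v ∈ ends e}.ncard = 2

/-- The component of `v` in the spanning subgraph with edge set `F`. -/
def component (ends : E → Sym2 V) (F : Set E) (v : V) : Set V := {w | Reach ends F v w}

/-- Every 2-factor consists only of 5-cycles: each component of any 2-factor
has exactly five vertices. -/
def TwoFactorsAllC5 (ends : E → Sym2 V) : Prop :=
  ∀ F : Set E, IsTwoFactor ends F → ∀ v, (component ends F v).ncard = 5

/-- A perfect matching: every vertex is incident with exactly one edge of `M`. -/
def IsPerfectMatching (ends : E → Sym2 V) (M : Set E) : Prop :=
  ∀ v, ∃! e, e ∈ M ∧ v ∈ ends e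

/-- A cycle of length `n`: `n` distinct vertices and `n` distinct edges, cyclically. -/
def HasCycle (ends : E → Sym2 V) (n : ℕ) : Prop :=
  ∃ (c : ZMod n → V) (f : ZMod n → E), Function.Injective c ∧ Function.Injective f ∧
    ∀ i, ends (f i) = s(c i, c (i + 1))

end Mg


set_option linter.unusedSectionVars false
set_option maxHeartbeats 1000000

section TutteAbstract

variable {V : Type} [Fintype V] (R : V → V → Prop)

def Astep (A : Set V) (a b : V) : Prop := a ∈ A ∧ b ∈ A ∧ R a b

def Areach (A : Set V) : V → V → Prop := Relation.ReflTransGen (Astep R A)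

def Acmp (A : Set V) (v : V) : Set V := {w | Areach R A v w}

def Aodds (A : Set V) : Set (Set V) := {C | (∃ v ∈ A, C = Acmp R A v) ∧ Odd C.ncard}

def AhasPM (A : Set V) : Prop := ∃ m : V → V, ∀ v ∈ A, m v ∈ A ∧ R v (m v) ∧ m (m v) = v

def AtutteCond (A : Set V) : Prop := ∀ T ⊆ A, (Aodds R (A \ T)).ncard ≤ T.ncard

variable {R}

lemma mem_Acmp_self (A : Set V) (v : V) : v ∈ Acmp R A v := Relation.ReflTransGen.refl

lemma Areach_symm (hsym : Symmetric R) {A : Set V} : Symmetric (Areach R A) :=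
  by
    haveI : Std.Symm (Astep R A) := ⟨fun _ _ h => ⟨h.2.1, h.1, hsym h.2.2⟩⟩
    exact fun a b hab => Std.Symm.symm (r := Relation.ReflTransGen (Astep R A)) a b hab

lemma Acmp_eq_of_mem (hsym : Symmetric R) {A : Set V} {v w : V} (h : w ∈ Acmp R A v) :
    Acmp R A w = Acmp R A v := by
  ext u
  constructor
  · exact fun hu => Relation.ReflTransGen.trans (h : Areach R A v w) hu
  · exact fun hu => Relation.ReflTransGen.trans (Areach_symm hsym h) hu

lemma Acmp_subset (A : Set V) {v : V} (hv : v ∈ A) : Acmp R A v ⊆ A := by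
  intro w hw
  induction hw with
  | refl => exact hv
  | tail _ h ih => exact h.2.1

lemma Acmp_mono {A B : Set V} (h : A ⊆ B) (v : V) : Acmp R A v ⊆ Acmp R B v :=
  fun _ hw => Relation.ReflTransGen.mono (fun _ _ hs => ⟨h hs.1, h hs.2.1, hs.2.2⟩) _ _ hw

lemma Acmp_subset_of_closed {A D : Set V} {v : V} (hv : v ∈ D)
    (hcl : ∀ a ∈ D, ∀ b, Astep R A a b → b ∈ D) : Acmp R A v ⊆ D := by
  intro w hw
  induction hw with
  | refl => exact hv
  | tail _ h ih => exact hcl _ ih _ h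

lemma Acmp_eq_of_subset {A B : Set V} {v : V} (hBA : B ⊆ A) (hsub : Acmp R A v ⊆ B) :
    Acmp R B v = Acmp R A v := by
  apply Set.Subset.antisymm (Acmp_mono hBA v)
  intro w hw
  have key : ∀ w, Areach R A v w → Areach R B v w := by
    intro w hw
    induction hw with
    | refl => exact Relation.ReflTransGen.refl
    | @tail x y hx h ih =>
        exact Relation.ReflTransGen.tail ih ⟨hsub hx, hsub (Relation.ReflTransGen.tail hx h), h.2.2⟩
  exact key w hw

lemma cast_sum_parity {α : Type} (s : Finset α) (f : α → ℕ) :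
    ((∑ x ∈ s, f x : ℕ) : ZMod 2) = ((s.filter (fun x => Odd (f x))).card : ZMod 2) := by
  classical
  rw [Nat.cast_sum, Finset.card_filter, Nat.cast_sum]
  apply Finset.sum_congr rfl
  intro x _
  rcases Nat.even_or_odd (f x) with h | h
  · have h2 : ((f x : ℤ) : ZMod 2) = 0 := by
      rw [ZMod.intCast_zmod_eq_zero_iff_dvd]; exact_mod_cast h.two_dvd
    simp only [Int.cast_natCast] at h2
    simp [h2, h, Nat.not_odd_iff_even.mpr h]
  · have h2 : (f x : ZMod 2) = 1 := by
      have := Nat.odd_iff.mp h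
      rw [← ZMod.natCast_mod (f x) 2, this, Nat.cast_one]
    simp [h2, h]

lemma zmod2_odd_iff {a b : ℕ} (h : (a : ZMod 2) = (b : ZMod 2)) : Odd a ↔ Odd b := by
  have := (ZMod.natCast_eq_natCast_iff a b 2).mp h
  unfold Nat.ModEq at this
  rw [Nat.odd_iff, Nat.odd_iff, this]

lemma parity_odds (hsym : Symmetric R) {A D : Set V}
    (hcl : ∀ u ∈ D, Acmp R A u ⊆ D) :
    ((D.ncard : ZMod 2)) = ({C | (∃ u ∈ D, C = Acmp R A u) ∧ Odd C.ncard}.ncard : ZMod 2) := by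
  classical
  set P : Finset (Set V) := {C | ∃ u ∈ D, C = Acmp R A u}.toFinite.toFinset with hP
  have hmemP : ∀ C, C ∈ P ↔ ∃ u ∈ D, C = Acmp R A u := by
    intro C; rw [hP, Set.Finite.mem_toFinset]; rfl
  have hD : D.toFinite.toFinset = P.biUnion (fun C => C.toFinite.toFinset) := by
    ext v
    simp only [Set.Finite.mem_toFinset, Finset.mem_biUnion]
    constructor
    · intro hv
      exact ⟨Acmp R A v, (hmemP _).mpr ⟨v, hv, rfl⟩, by
        exact mem_Acmp_self A v⟩
    · rintro ⟨C, hC, hvC⟩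
      obtain ⟨u, huD, rfl⟩ := (hmemP _).mp hC
      exact hcl u huD hvC
  have hdisj : ∀ C₁ ∈ P, ∀ C₂ ∈ P, C₁ ≠ C₂ →
      Disjoint (C₁.toFinite.toFinset) (C₂.toFinite.toFinset) := by
    intro C₁ h₁ C₂ h₂ hne
    obtain ⟨u₁, _, rfl⟩ := (hmemP _).mp h₁
    obtain ⟨u₂, _, rfl⟩ := (hmemP _).mp h₂
    rw [Finset.disjoint_left]
    intro w hw₁ hw₂
    rw [Set.Finite.mem_toFinset] at hw₁ hw₂
    exact hne ((Acmp_eq_of_mem hsym hw₁).symm.trans (Acmp_eq_of_mem hsym hw₂))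
  have hcard : D.ncard = ∑ C ∈ P, C.ncard := by
    rw [Set.ncard_eq_toFinset_card _ D.toFinite, hD, Finset.card_biUnion hdisj]
    exact Finset.sum_congr rfl (fun C _ => (Set.ncard_eq_toFinset_card _ C.toFinite).symm)
  have hodds : {C | (∃ u ∈ D, C = Acmp R A u) ∧ Odd C.ncard}.ncard
      = (P.filter (fun C => Odd C.ncard)).card := by
    rw [Set.ncard_eq_toFinset_card _ (Set.toFinite _)]
    congr 1
    ext C
    simp only [Set.Finite.mem_toFinset, Finset.mem_filter, hmemP, Set.mem_setOf_eq]
  rw [hcard, hodds, cast_sum_parity]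

end TutteAbstract

section Tutte2
variable {V : Type} [Fintype V] {R : V → V → Prop}

def Tight (R : V → V → Prop) (A T : Set V) : Prop :=
  T ⊆ A ∧ T.Nonempty ∧ (Aodds R (A \ T)).ncard = T.ncard

lemma even_ncard_of_tutteCond (hsym : Symmetric R) {A : Set V} (h : AtutteCond R A) :
    Even A.ncard := by
  have h0 := h ∅ (Set.empty_subset A)
  rw [Set.diff_empty, Set.ncard_empty, Nat.le_zero] at h0
  have hpar := parity_odds (A := A) (D := A) hsym (fun u hu => Acmp_subset A hu)
  have : {C | (∃ u ∈ A, C = Acmp R A u) ∧ Odd C.ncard} = Aodds R A := rfl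
  rw [this, h0] at hpar
  have := zmod2_odd_iff hpar
  simp only [Set.ncard_empty, Nat.odd_iff] at this
  rw [Nat.even_iff]
  omega

lemma singleton_tight (hsym : Symmetric R) {A : Set V} (h : AtutteCond R A) {v0 : V}
    (hv0 : v0 ∈ A) : Tight R A {v0} := by
  refine ⟨Set.singleton_subset_iff.mpr hv0, Set.singleton_nonempty v0, ?_⟩
  have hle := h {v0} (Set.singleton_subset_iff.mpr hv0)
  rw [Set.ncard_singleton] at hle ⊢
  have hpar := parity_odds (A := A \ {v0}) (D := A \ {v0}) hsym
    (fun u hu => Acmp_subset _ hu)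
  have heq : {C | (∃ u ∈ A \ {v0}, C = Acmp R (A \ {v0}) u) ∧ Odd C.ncard}
      = Aodds R (A \ {v0}) := rfl
  rw [heq] at hpar
  have hcd : (A \ {v0}).ncard = A.ncard - 1 := Set.ncard_diff_singleton_of_mem hv0
  have heven := even_ncard_of_tutteCond hsym h
  have hpos : 1 ≤ A.ncard := (Set.ncard_pos (Set.toFinite A)).mpr ⟨v0, hv0⟩
  have hodd : Odd (A \ {v0}).ncard := by
    rw [hcd, Nat.odd_iff]; rw [Nat.even_iff] at heven; omega
  have := (zmod2_odd_iff hpar).mp hodd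
  rw [Nat.odd_iff] at this
  omega
end Tutte2

section Tutte3
variable {V : Type} [Fintype V] {R : V → V → Prop}

lemma subset_active_of_mem_odds {A : Set V} {C : Set V} (hC : C ∈ Aodds R A) : C ⊆ A := by
  obtain ⟨⟨u, hu, rfl⟩, _⟩ := hC
  exact Acmp_subset A hu

lemma nonempty_of_mem_odds {A : Set V} {C : Set V} (hC : C ∈ Aodds R A) : C.Nonempty := by
  obtain ⟨⟨u, hu, rfl⟩, _⟩ := hC
  exact ⟨u, mem_Acmp_self A u⟩

/-- an odd component survives when we delete vertices disjoint from it -/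
lemma mem_odds_diff (hsym : Symmetric R) {A W : Set V} {C : Set V}
    (hC : C ∈ Aodds R A) (hW : Disjoint C W) : C ∈ Aodds R (A \ W) := by
  obtain ⟨⟨u, hu, rfl⟩, hodd⟩ := hC
  have hsub : Acmp R A u ⊆ A \ W := fun x hx =>
    ⟨Acmp_subset A hu hx, fun hxW => (Set.disjoint_left.mp hW hx) hxW⟩
  have heq := Acmp_eq_of_subset (Set.diff_subset) hsub
  exact ⟨⟨u, hsub (mem_Acmp_self A u), heq.symm⟩, heq.symm ▸ hodd⟩

lemma comp_odd_of_maximal_tight (hsym : Symmetric R) {A S : Set V} (h : AtutteCond R A)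
    (hS : Maximal (Tight R A) S) :
    ∀ v ∈ A \ S, Acmp R (A \ S) v ∈ Aodds R (A \ S) := by
  intro v hv
  by_contra hcon
  set C := Acmp R (A \ S) v with hCdef
  have hodd' : ¬ Odd C.ncard := fun ho => hcon ⟨⟨v, hv, rfl⟩, ho⟩
  have hCsub : C ⊆ A \ S := Acmp_subset _ hv
  have hvC : v ∈ C := mem_Acmp_self _ v
  -- the new deleted set
  set S' : Set V := insert v S with hS'def
  have hvS : v ∉ S := hv.2
  have hS'A : S' ⊆ A := Set.insert_subset hv.1 hS.1.1
  have hS'card : S'.ncard = S.ncard + 1 := Set.ncard_insert_of_notMem hvS (Set.toFinite S)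
  have hASS' : A \ S' ⊆ A \ S := Set.diff_subset_diff_right (Set.subset_insert v S)
  -- old odd components are disjoint from C
  have hdisjC : ∀ C' ∈ Aodds R (A \ S), Disjoint C' C := by
    intro C' hC'
    obtain ⟨⟨u, hu, rfl⟩, hodd⟩ := hC'
    rw [Set.disjoint_left]
    intro x hx hxC
    have heq2 : Acmp R (A \ S) u = C := by
      rw [← Acmp_eq_of_mem hsym hx]; exact Acmp_eq_of_mem hsym hxC
    exact hodd' (heq2 ▸ hodd)
  -- old odd components survive
  have hold : Aodds R (A \ S) ⊆ Aodds R (A \ S') := by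
    intro C' hC'
    have : A \ S' = (A \ S) \ {v} := by
      rw [hS'def]; ext x; simp [Set.mem_diff, and_assoc, and_comm, not_or]; tauto
    rw [this]
    apply mem_odds_diff hsym hC'
    rw [Set.disjoint_singleton_right]
    exact fun hvc => (Set.disjoint_right.mp (hdisjC C' hC') hvC) hvc
  -- a new odd component inside C \ {v}
  have hclos : ∀ u ∈ C \ {v}, Acmp R (A \ S') u ⊆ C \ {v} := by
    intro u hu
    apply Acmp_subset_of_closed hu
    rintro a ⟨haC, hav⟩ b hb
    have hbAS' : b ∈ A \ S' := hb.2.1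
    have hbAS : b ∈ A \ S := hASS' hbAS'
    have : b ∈ Acmp R (A \ S) a := Relation.ReflTransGen.single ⟨hASS' hb.1, hbAS, hb.2.2⟩
    rw [Acmp_eq_of_mem hsym haC] at this
    refine ⟨this, fun hbv => ?_⟩
    rw [hbv] at hbAS'
    exact hbAS'.2 (Set.mem_insert v S)
  have hCvcard : (C \ {v}).ncard = C.ncard - 1 := Set.ncard_diff_singleton_of_mem hvC
  have hCpos : 0 < C.ncard := (Set.ncard_pos (Set.toFinite C)).mpr ⟨v, hvC⟩
  have hCvodd : Odd (C \ {v}).ncard := by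
    rw [hCvcard, Nat.odd_iff]
    rw [Nat.odd_iff] at hodd'
    omega
  have hpar := parity_odds (A := A \ S') (D := C \ {v}) hsym hclos
  have : Odd {C' | (∃ u ∈ C \ {v}, C' = Acmp R (A \ S') u) ∧ Odd C'.ncard}.ncard :=
    (zmod2_odd_iff hpar).mp hCvodd
  have hne : {C' | (∃ u ∈ C \ {v}, C' = Acmp R (A \ S') u) ∧ Odd C'.ncard}.Nonempty := by
    apply Set.nonempty_of_ncard_ne_zero
    obtain ⟨m, hm⟩ := this
    omega
  obtain ⟨C₁, hC₁⟩ := hne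
  obtain ⟨⟨u₁, hu₁, hC₁eq⟩, hC₁odd⟩ := hC₁
  have hu₁AS' : u₁ ∈ A \ S' := by
    refine ⟨(hCsub hu₁.1).1, fun hc => ?_⟩
    rcases Set.mem_insert_iff.mp hc with h1 | h2
    · exact hu₁.2 h1
    · exact (hCsub hu₁.1).2 h2
  have hC₁mem : C₁ ∈ Aodds R (A \ S') := ⟨⟨u₁, hu₁AS', hC₁eq⟩, hC₁odd⟩
  have hC₁sub : C₁ ⊆ C \ {v} := hC₁eq ▸ hclos u₁ hu₁
  have hC₁new : C₁ ∉ Aodds R (A \ S) := by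
    intro hmem
    have := hdisjC C₁ hmem
    have hu₁C₁ : u₁ ∈ C₁ := hC₁eq ▸ mem_Acmp_self _ u₁
    exact (Set.disjoint_left.mp this hu₁C₁) hu₁.1
  -- count
  have hub := h S' hS'A
  have hins : insert C₁ (Aodds R (A \ S)) ⊆ Aodds R (A \ S') := by
    intro X hX
    rcases Set.mem_insert_iff.mp hX with rfl | hX'
    · exact hC₁mem
    · exact hold hX'
  have hcount : S.ncard + 1 ≤ (Aodds R (A \ S')).ncard := by
    have h1 : (insert C₁ (Aodds R (A \ S))).ncard = (Aodds R (A \ S)).ncard + 1 :=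
      Set.ncard_insert_of_notMem hC₁new (Set.toFinite _)
    have h2 := Set.ncard_le_ncard hins (Set.toFinite _)
    rw [h1, hS.1.2.2] at h2
    exact h2
  have htight' : Tight R A S' := by
    refine ⟨hS'A, ⟨v, Set.mem_insert v S⟩, le_antisymm (by rw [hS'card] at hub ⊢; exact hub) ?_⟩
    rw [hS'card]; exact hcount
  have := hS.2 htight' (Set.subset_insert v S)
  exact hvS (this (Set.mem_insert v S))
end Tutte3

section Tutte4
variable {V : Type} [Fintype V] {R : V → V → Prop}

lemma odds_disjoint (hsym : Symmetric R) {A : Set V} {C₁ C₂ : Set V}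
    (h₁ : C₁ ∈ Aodds R A) (h₂ : C₂ ∈ Aodds R A) (hne : C₁ ≠ C₂) : Disjoint C₁ C₂ := by
  obtain ⟨⟨u₁, hu₁, rfl⟩, _⟩ := h₁
  obtain ⟨⟨u₂, hu₂, rfl⟩, _⟩ := h₂
  rw [Set.disjoint_left]
  intro x hx₁ hx₂
  exact hne ((Acmp_eq_of_mem hsym hx₁).symm.trans (Acmp_eq_of_mem hsym hx₂))

lemma tutteCond_sub (hsym : Symmetric R) {A S : Set V} (h : AtutteCond R A)
    (hS : Maximal (Tight R A) S) {C : Set V} (hC : C ∈ Aodds R (A \ S)) {u : V} (hu : u ∈ C) :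
    AtutteCond R (C \ {u}) := by
  intro T' hT'
  by_contra hcon
  push_neg at hcon
  have hCsub : C ⊆ A \ S := subset_active_of_mem_odds hC
  have hCodd : Odd C.ncard := hC.2
  have hSA : S ⊆ A := hS.1.1
  have hSne : S.Nonempty := hS.1.2.1
  have hSpos : 1 ≤ S.ncard := (Set.ncard_pos (Set.toFinite S)).mpr hSne
  have huS : u ∉ S := (hCsub hu).2
  have hT'C : T' ⊆ C := hT'.trans Set.diff_subset
  have hT'u : u ∉ T' := fun hc => (hT' hc).2 rfl
  set D : Set V := (C \ {u}) \ T' with hDdef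
  set q : ℕ := (Aodds R D).ncard with hq
  -- cardinalities
  have hCu : (C \ {u}).ncard = C.ncard - 1 := Set.ncard_diff_singleton_of_mem hu
  have hT'le : T'.ncard ≤ (C \ {u}).ncard := Set.ncard_le_ncard hT' (Set.toFinite _)
  have hD : D.ncard = (C \ {u}).ncard - T'.ncard := Set.ncard_diff hT' (Set.toFinite _)
  -- parity: q ≡ |D| mod 2
  have hpar := parity_odds (A := D) (D := D) hsym (fun x hx => Acmp_subset _ hx)
  have heqset : {C' | (∃ x ∈ D, C' = Acmp R D x) ∧ Odd C'.ncard} = Aodds R D := rfl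
  rw [heqset] at hpar
  have hCpos : 1 ≤ C.ncard := (Set.ncard_pos (Set.toFinite C)).mpr ⟨u, hu⟩
  have hq2 : T'.ncard + 2 ≤ q := by
    have hiff := zmod2_odd_iff hpar
    rw [Nat.odd_iff, Nat.odd_iff] at hiff
    have hmod : q % 2 = D.ncard % 2 := by
      rcases Nat.mod_two_eq_zero_or_one q with h1 | h1 <;>
        rcases Nat.mod_two_eq_zero_or_one D.ncard with h2 | h2
      · omega
      · exact absurd (hiff.mp h2) (by omega)
      · exact absurd (hiff.mpr h1) (by omega)
      · omega
    obtain ⟨m, hm⟩ := hCodd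
    omega
  -- the new deleted set
  set T'' : Set V := (S ∪ {u}) ∪ T' with hT''def
  have hT''A : T'' ⊆ A := by
    rw [hT''def]
    refine Set.union_subset (Set.union_subset hSA ?_) (fun x hx => (hCsub (hT'C hx)).1)
    simpa using (hCsub hu).1
  have hT''card : T''.ncard = S.ncard + 1 + T'.ncard := by
    rw [hT''def]
    rw [Set.ncard_union_eq ?d1 (Set.toFinite _) (Set.toFinite _),
        Set.ncard_union_eq ?d2 (Set.toFinite _) (Set.toFinite _), Set.ncard_singleton]
    case d2 =>
      rw [Set.disjoint_singleton_right]; exact huS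
    case d1 =>
      rw [Set.disjoint_left]
      rintro x (hxS | hxu) hxT'
      · exact ((hCsub (hT'C hxT')).2) hxS
      · rw [Set.mem_singleton_iff] at hxu
        exact hT'u (hxu ▸ hxT')
  -- membership transfers
  have hAT'' : A \ T'' = (A \ S) \ ({u} ∪ T') := by
    rw [hT''def]; ext x; simp only [Set.mem_diff, Set.mem_union, Set.mem_singleton_iff]; tauto
  have hold : ∀ C' ∈ Aodds R (A \ S), C' ≠ C → C' ∈ Aodds R (A \ T'') := by
    intro C' hC' hne
    rw [hAT'']
    apply mem_odds_diff hsym hC'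
    have hdCC : Disjoint C' C := odds_disjoint hsym hC' hC hne
    refine Set.disjoint_union_right.mpr ⟨?_, ?_⟩
    · rw [Set.disjoint_singleton_right]
      exact Set.disjoint_right.mp hdCC hu
    · exact Set.disjoint_of_subset_right hT'C hdCC
  have hDsubA : D ⊆ A \ T'' := by
    intro x hx
    rw [hAT'']
    exact ⟨hCsub hx.1.1, by
      simp only [Set.mem_union, Set.mem_singleton_iff]
      push_neg
      exact ⟨hx.1.2, hx.2⟩⟩
  obtain ⟨w, hwAS, hCw⟩ := hC.1
  have hnew : ∀ C₁ ∈ Aodds R D, C₁ ∈ Aodds R (A \ T'') := by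
    rintro C₁ ⟨⟨u₁, hu₁, rfl⟩, hodd⟩
    have hclos : Acmp R (A \ T'') u₁ ⊆ D := by
      apply Acmp_subset_of_closed hu₁
      rintro a haD b hb
      have hbA : b ∈ A \ T'' := hb.2.1
      rw [hAT''] at hbA
      have hbC : b ∈ Acmp R (A \ S) a :=
        Relation.ReflTransGen.single ⟨hCsub haD.1.1, hbA.1, hb.2.2⟩
      have haw : a ∈ Acmp R (A \ S) w := by rw [← hCw]; exact haD.1.1
      have hCa : Acmp R (A \ S) a = C := by rw [hCw]; exact Acmp_eq_of_mem hsym haw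
      rw [hCa] at hbC
      refine ⟨⟨hbC, fun hbu => ?_⟩, fun hbT' => ?_⟩
      · exact hbA.2 (Or.inl hbu)
      · exact hbA.2 (Or.inr hbT')
    have heq := Acmp_eq_of_subset hDsubA hclos
    exact ⟨⟨u₁, hDsubA hu₁, heq⟩, hodd⟩
  -- counting
  have hsplit : (Aodds R (A \ S) \ {C}) ∪ Aodds R D ⊆ Aodds R (A \ T'') := by
    rintro X (⟨hX, hXne⟩ | hX)
    · exact hold X hX hXne
    · exact hnew X hX
  have hdisjfam : Disjoint (Aodds R (A \ S) \ {C}) (Aodds R D) := by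
    rw [Set.disjoint_left]
    rintro X ⟨hX, hXne⟩ hXD
    have hXsub : X ⊆ C := (subset_active_of_mem_odds hXD).trans
      (Set.diff_subset.trans Set.diff_subset)
    obtain ⟨x, hx⟩ := nonempty_of_mem_odds hXD
    have hdCC : Disjoint X C := odds_disjoint hsym hX hC hXne
    exact Set.disjoint_left.mp hdCC hx (hXsub hx)
  have hkm1 : (Aodds R (A \ S) \ {C}).ncard = S.ncard - 1 := by
    rw [Set.ncard_diff_singleton_of_mem hC, hS.1.2.2]
  have hcount : (Aodds R (A \ T'')).ncard ≥ S.ncard - 1 + q := by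
    calc (Aodds R (A \ T'')).ncard
        ≥ ((Aodds R (A \ S) \ {C}) ∪ Aodds R D).ncard :=
          Set.ncard_le_ncard hsplit (Set.toFinite _)
      _ = S.ncard - 1 + q := by
          rw [Set.ncard_union_eq hdisjfam (Set.toFinite _) (Set.toFinite _), hkm1]
  have hub := h T'' hT''A
  have htight : Tight R A T'' := by
    refine ⟨hT''A, ⟨u, Or.inl (Or.inr rfl)⟩, le_antisymm hub ?_⟩
    rw [hT''card]
    omega
  have hsub : S ⊆ T'' := fun x hx => Or.inl (Or.inl hx)
  have := hS.2 htight hsub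
  exact huS (this (Or.inl (Or.inr rfl)))
end Tutte4

section Tutte5
variable {V : Type} [Fintype V] {R : V → V → Prop}

lemma hall_for_odds (hsym : Symmetric R) {A S : Set V} (h : AtutteCond R A) (hSA : S ⊆ A) :
    ∃ f : {C : Set V // C ∈ Aodds R (A \ S)} → V, Function.Injective f ∧
      ∀ C, f C ∈ S ∧ ∃ u ∈ C.1, R u (f C) := by
  classical
  set ι := {C : Set V // C ∈ Aodds R (A \ S)} with hι
  set t : ι → Finset V := fun C => (S ∩ {s | ∃ u ∈ C.1, R u s}).toFinite.toFinset with ht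
  have hmt : ∀ (C : ι) (x : V), x ∈ t C ↔ x ∈ S ∧ ∃ u ∈ C.1, R u x := by
    intro C x
    rw [ht]
    simp only [Set.Finite.mem_toFinset]
    exact Iff.rfl
  have hhall : ∀ s : Finset ι, s.card ≤ (s.biUnion t).card := by
    intro s
    set N : Set V := ↑(s.biUnion t) with hN
    have hNS : N ⊆ S := by
      intro x hx
      rw [hN, Finset.coe_biUnion] at hx
      simp only [Set.mem_iUnion, Finset.mem_coe] at hx
      obtain ⟨C, _, hxC⟩ := hx
      exact ((hmt C x).mp hxC).1
    have hmem : ∀ C ∈ s, C.1 ∈ Aodds R (A \ N) := by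
      intro C hCs
      obtain ⟨⟨uC, huC, hCeq⟩, hodd⟩ := C.2
      have huCC : uC ∈ C.1 := hCeq ▸ mem_Acmp_self _ uC
      have hCsub : C.1 ⊆ A \ S := hCeq ▸ Acmp_subset _ huC
      have hANsub : A \ S ⊆ A \ N := Set.diff_subset_diff_right hNS
      have hsup : C.1 ⊆ Acmp R (A \ N) uC := by
        rw [hCeq]; exact Acmp_mono hANsub uC
      have hsub : Acmp R (A \ N) uC ⊆ C.1 := by
        apply Acmp_subset_of_closed huCC
        rintro a haC b hb
        have hbAN : b ∈ A \ N := hb.2.1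
        by_cases hbS : b ∈ S
        · exfalso
          apply hbAN.2
          rw [hN, Finset.coe_biUnion]
          simp only [Set.mem_iUnion, Finset.mem_coe]
          exact ⟨C, hCs, (hmt C b).mpr ⟨hbS, a, haC, hb.2.2⟩⟩
        · have hbAS : b ∈ A \ S := ⟨hbAN.1, hbS⟩
          have : b ∈ Acmp R (A \ S) a :=
            Relation.ReflTransGen.single ⟨hCsub haC, hbAS, hb.2.2⟩
          have haw : a ∈ Acmp R (A \ S) uC := by rw [← hCeq]; exact haC
          have : b ∈ Acmp R (A \ S) uC := by
            rw [← Acmp_eq_of_mem hsym haw]; exact this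
          rw [← hCeq] at this
          exact this
      have heq := Set.Subset.antisymm hsub hsup
      have huCAN : uC ∈ A \ N := hANsub huC
      exact ⟨⟨uC, huCAN, heq.symm⟩, hodd⟩
    have hNA : N ⊆ A := hNS.trans hSA
    have h1 : s.card = (s.image Subtype.val).card :=
      (Finset.card_image_of_injective s Subtype.val_injective).symm
    have h2 : (s.image Subtype.val) ⊆ (Aodds R (A \ N)).toFinite.toFinset := by
      intro X hX
      obtain ⟨C, hCs, rfl⟩ := Finset.mem_image.mp hX
      rw [Set.Finite.mem_toFinset]
      exact hmem C hCs
    calc s.card = (s.image Subtype.val).card := h1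
      _ ≤ (Aodds R (A \ N)).toFinite.toFinset.card := Finset.card_le_card h2
      _ = (Aodds R (A \ N)).ncard := (Set.ncard_eq_toFinset_card _ _).symm
      _ ≤ N.ncard := h N hNA
      _ = (s.biUnion t).card := by rw [hN, Set.ncard_coe_finset]
  obtain ⟨f, hinj, hf⟩ := (Finset.all_card_le_biUnion_card_iff_exists_injective t).mp hhall
  refine ⟨f, hinj, fun C => ?_⟩
  have := (hmt C (f C)).mp (hf C)
  exact ⟨this.1, this.2⟩
end Tutte5

section Tutte6
variable {V : Type} [Fintype V] {R : V → V → Prop}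

theorem Atutte (hsym : Symmetric R) :
    ∀ (n : ℕ) (A : Set V), A.ncard ≤ n → AtutteCond R A → AhasPM R A := by
  classical
  intro n
  induction n with
  | zero =>
    intro A hA h
    have : A = ∅ := (Set.ncard_eq_zero (Set.toFinite A)).mp (Nat.le_zero.mp hA)
    exact ⟨id, by simp [this]⟩
  | succ n ih =>
    intro A hA h
    rcases A.eq_empty_or_nonempty with rfl | ⟨v0, hv0⟩
    · exact ⟨id, by simp⟩
    obtain ⟨S, _, hSmax⟩ := Finite.exists_le_maximal (singleton_tight hsym h hv0)
    have hSA : S ⊆ A := hSmax.1.1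
    have hSne : S.Nonempty := hSmax.1.2.1
    have hScard : (Aodds R (A \ S)).ncard = S.ncard := hSmax.1.2.2
    have hSpos : 1 ≤ S.ncard := (Set.ncard_pos (Set.toFinite S)).mpr hSne
    set ι := {C : Set V // C ∈ Aodds R (A \ S)} with hι
    obtain ⟨f, hinj, hf⟩ := hall_for_odds hsym h hSA
    have hallodd := comp_odd_of_maximal_tight hsym h hSmax
    -- surjectivity of f onto S
    have hcardι : Fintype.card ι = S.ncard := by
      rw [← hScard, ← Nat.card_coe_set_eq, Nat.card_eq_fintype_card]
    have hsurj : ∀ x ∈ S, ∃ C : ι, f C = x := by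
      intro x hx
      have himg : (Finset.univ.image f) ⊆ S.toFinite.toFinset := by
        intro y hy
        obtain ⟨C, _, rfl⟩ := Finset.mem_image.mp hy
        rw [Set.Finite.mem_toFinset]
        exact (hf C).1
      have hcard : (Finset.univ.image f).card = S.toFinite.toFinset.card := by
        rw [Finset.card_image_of_injective _ hinj, Finset.card_univ, hcardι,
          Set.ncard_eq_toFinset_card]
      have := Finset.eq_of_subset_of_card_le himg (le_of_eq hcard.symm)
      have hxmem : x ∈ Finset.univ.image f := by
        rw [this, Set.Finite.mem_toFinset]; exact hx
      obtain ⟨C, _, hCx⟩ := Finset.mem_image.mp hxmem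
      exact ⟨C, hCx⟩
    -- choose the matched vertex in each component
    have huex : ∀ C : ι, ∃ u, u ∈ C.1 ∧ R u (f C) := fun C => (hf C).2
    set uC : ι → V := fun C => Classical.choose (huex C) with huCdef
    have huC : ∀ C : ι, uC C ∈ C.1 ∧ R (uC C) (f C) := fun C => Classical.choose_spec (huex C)
    -- sub-matchings
    have hpm : ∀ C : ι, AhasPM R (C.1 \ {uC C}) := by
      intro C
      apply ih
      · have hsub : C.1 ⊆ A \ S := subset_active_of_mem_odds C.2
        have h1 : (C.1 \ {uC C}).ncard = C.1.ncard - 1 :=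
          Set.ncard_diff_singleton_of_mem (huC C).1
        have h2 : C.1.ncard ≤ (A \ S).ncard := Set.ncard_le_ncard hsub (Set.toFinite _)
        have h3 : (A \ S).ncard = A.ncard - S.ncard := Set.ncard_diff hSA (Set.toFinite _)
        omega
      · exact tutteCond_sub hsym h hSmax C.2 (huC C).1
    set mm : ι → V → V := fun C => Classical.choose (hpm C) with hmmdef
    have hmm : ∀ (C : ι), ∀ v ∈ C.1 \ {uC C},
        mm C v ∈ C.1 \ {uC C} ∧ R v (mm C v) ∧ mm C (mm C v) = v :=
      fun C => Classical.choose_spec (hpm C)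
    -- define the matching
    set m : V → V := fun v =>
      if hvS : v ∈ S then uC (Classical.choose (hsurj v hvS))
      else if hvA : v ∈ A \ S then
        (if v = uC ⟨Acmp R (A \ S) v, hallodd v hvA⟩
          then f ⟨Acmp R (A \ S) v, hallodd v hvA⟩
          else mm ⟨Acmp R (A \ S) v, hallodd v hvA⟩ v)
      else v with hmdef
    -- helper facts
    have hmS : ∀ v (hvS : v ∈ S), m v = uC (Classical.choose (hsurj v hvS)) := by
      intro v hvS; rw [hmdef]; simp only [dif_pos hvS]
    have hmAS : ∀ v (hvA : v ∈ A \ S),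
        m v = (if v = uC ⟨Acmp R (A \ S) v, hallodd v hvA⟩
          then f ⟨Acmp R (A \ S) v, hallodd v hvA⟩
          else mm ⟨Acmp R (A \ S) v, hallodd v hvA⟩ v) := by
      intro v hvA; rw [hmdef]; simp only [dif_neg hvA.2, dif_pos hvA]
    have hCval : ∀ (C : ι) (v : V) (hv : v ∈ C.1),
        (⟨Acmp R (A \ S) v, hallodd v (subset_active_of_mem_odds C.2 hv)⟩ : ι) = C := by
      intro C v hv
      apply Subtype.ext
      obtain ⟨⟨w, hw, hCw⟩, _⟩ := C.2
      have : v ∈ Acmp R (A \ S) w := by rw [← hCw]; exact hv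
      simp only
      rw [Acmp_eq_of_mem hsym this, ← hCw]
    -- key: m of a vertex in a component, not the special one
    refine ⟨m, fun v hvA0 => ?_⟩
    by_cases hvS : v ∈ S
    · -- v ∈ S
      set C₀ := Classical.choose (hsurj v hvS) with hC₀
      have hfC₀ : f C₀ = v := Classical.choose_spec (hsurj v hvS)
      have hmv : m v = uC C₀ := hmS v hvS
      have huC₀ : uC C₀ ∈ C₀.1 := (huC C₀).1
      have huCAS : uC C₀ ∈ A \ S := subset_active_of_mem_odds C₀.2 huC₀
      refine ⟨hmv ▸ huCAS.1, ?_, ?_⟩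
      · rw [hmv]
        exact hsym (hfC₀ ▸ (huC C₀).2)
      · rw [hmv, hmAS (uC C₀) huCAS]
        rw [if_pos]
        · rw [hCval C₀ (uC C₀) huC₀, hfC₀]
        · rw [hCval C₀ (uC C₀) huC₀]
    · have hvA : v ∈ A \ S := ⟨hvA0, hvS⟩
      set C := (⟨Acmp R (A \ S) v, hallodd v hvA⟩ : ι) with hCdef
      have hvC : v ∈ C.1 := mem_Acmp_self _ v
      by_cases hveq : v = uC C
      · -- v is the special vertex of its component
        have hmv : m v = f C := by rw [hmAS v hvA, if_pos hveq]
        have hfS : f C ∈ S := (hf C).1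
        refine ⟨hmv ▸ hSA hfS, ?_, ?_⟩
        · rw [hmv]
          have := (huC C).2
          rw [← hveq] at this
          exact this
        · rw [hmv, hmS (f C) hfS]
          set C₁ := Classical.choose (hsurj (f C) hfS) with hC₁
          have hfC₁ : f C₁ = f C := Classical.choose_spec (hsurj (f C) hfS)
          have : C₁ = C := hinj hfC₁
          rw [this, ← hveq]
      · -- generic vertex
        have hvCu : v ∈ C.1 \ {uC C} := ⟨hvC, hveq⟩
        have hmmv := hmm C v hvCu
        have hmv : m v = mm C v := by rw [hmAS v hvA, if_neg hveq]
        have hmvC : mm C v ∈ C.1 \ {uC C} := hmmv.1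
        have hmvAS : mm C v ∈ A \ S := subset_active_of_mem_odds C.2 hmvC.1
        refine ⟨hmv ▸ hmvAS.1, hmv ▸ hmmv.2.1, ?_⟩
        rw [hmv, hmAS (mm C v) hmvAS]
        rw [hCval C (mm C v) hmvC.1, if_neg (fun hcc => hmvC.2 (Set.mem_singleton_iff.mpr hcc))]
        exact hmmv.2.2
end Tutte6

section Counting
variable {V E : Type} [Fintype V] [Fintype E]

lemma sym2_rep (p : Sym2 V) : ∃ a b, p = s(a, b) := by
  induction p using Sym2.ind with
  | _ x y => exact ⟨x, y, rfl⟩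

open Classical in
/-- cross edges: exactly one endpoint in C -/
noncomputable def crossF (ends : E → Sym2 V) (C : Set V) : Finset E :=
  Finset.univ.filter (fun f => ∃ a b, ends f = s(a, b) ∧ a ∈ C ∧ b ∉ C)

open Classical in
noncomputable def bothF (ends : E → Sym2 V) (C : Set V) : Finset E :=
  Finset.univ.filter (fun f => ∃ a b, ends f = s(a, b) ∧ a ∈ C ∧ b ∈ C)

open Classical in
lemma mem_crossF {ends : E → Sym2 V} {C : Set V} {f : E} :
    f ∈ crossF ends C ↔ ∃ a b, ends f = s(a, b) ∧ a ∈ C ∧ b ∉ C := by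
  simp [crossF]

open Classical in
lemma cross_of_ends {ends : E → Sym2 V} {C : Set V} {f : E} {a b : V}
    (h : ends f = s(a, b)) (ha : a ∈ C) (hb : b ∉ C) : f ∈ crossF ends C :=
  mem_crossF.mpr ⟨a, b, h, ha, hb⟩

open Classical in
lemma degree_sum (ends : E → Sym2 V) (hl : ∀ f, ¬ (ends f).IsDiag) (C : Set V) :
    ∑ v ∈ C.toFinite.toFinset, (Finset.univ.filter (fun f => v ∈ ends f)).card
      = (crossF ends C).card + 2 * (bothF ends C).card := by
  classical
  have hswap : ∑ v ∈ C.toFinite.toFinset, (Finset.univ.filter (fun f => v ∈ ends f)).card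
      = ∑ f : E, (C.toFinite.toFinset.filter (fun v => v ∈ ends f)).card := by
    simp only [Finset.card_filter]
    rw [Finset.sum_comm]
  rw [hswap]
  have hpt : ∀ f : E, (C.toFinite.toFinset.filter (fun v => v ∈ ends f)).card
      = (if f ∈ crossF ends C then 1 else 0) + (if f ∈ bothF ends C then 2 else 0) := by
    intro f
    obtain ⟨a, b, hab⟩ := sym2_rep (ends f)
    have hne : a ≠ b := by
      have := hl f
      rw [hab, Sym2.mk_isDiag_iff] at this
      exact this
    have hfil : C.toFinite.toFinset.filter (fun v => v ∈ ends f)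
        = C.toFinite.toFinset ∩ {a, b} := by
      ext x
      simp only [Finset.mem_filter, Finset.mem_inter, Finset.mem_insert, Finset.mem_singleton,
        hab, Sym2.mem_iff]
    rw [hfil]
    have hcross : f ∈ crossF ends C ↔ ((a ∈ C ∧ b ∉ C) ∨ (b ∈ C ∧ a ∉ C)) := by
      rw [mem_crossF]
      constructor
      · rintro ⟨a', b', h', ha', hb'⟩
        rw [hab] at h'
        rcases Sym2.eq_iff.mp h' with ⟨rfl, rfl⟩ | ⟨rfl, rfl⟩
        · exact Or.inl ⟨ha', hb'⟩
        · exact Or.inr ⟨ha', hb'⟩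
      · rintro (⟨h1, h2⟩ | ⟨h1, h2⟩)
        · exact ⟨a, b, hab, h1, h2⟩
        · exact ⟨b, a, hab.trans Sym2.eq_swap, h1, h2⟩
    have hboth : f ∈ bothF ends C ↔ (a ∈ C ∧ b ∈ C) := by
      simp only [bothF, Finset.mem_filter, Finset.mem_univ, true_and]
      constructor
      · rintro ⟨a', b', h', ha', hb'⟩
        rw [hab] at h'
        rcases Sym2.eq_iff.mp h' with ⟨rfl, rfl⟩ | ⟨rfl, rfl⟩
        · exact ⟨ha', hb'⟩
        · exact ⟨hb', ha'⟩
      · rintro ⟨h1, h2⟩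
        exact ⟨a, b, hab, h1, h2⟩
    by_cases haC : a ∈ C <;> by_cases hbC : b ∈ C
    · rw [if_neg, if_pos (hboth.mpr ⟨haC, hbC⟩)]
      · have : C.toFinite.toFinset ∩ {a, b} = {a, b} := by
          rw [Finset.inter_eq_right]
          intro x hx
          rw [Set.Finite.mem_toFinset]
          rcases Finset.mem_insert.mp hx with rfl | hx'
          · exact haC
          · rw [Finset.mem_singleton] at hx'; exact hx' ▸ hbC
        rw [this, Finset.card_insert_of_notMem (by simpa using hne), Finset.card_singleton]
      · rw [hcross]; push_neg; exact ⟨fun _ => hbC, fun _ => haC⟩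
    · rw [if_pos (hcross.mpr (Or.inl ⟨haC, hbC⟩)), if_neg (fun hc => hbC (hboth.mp hc).2)]
      have : C.toFinite.toFinset ∩ {a, b} = {a} := by
        ext x
        simp only [Finset.mem_inter, Finset.mem_insert, Finset.mem_singleton,
          Set.Finite.mem_toFinset]
        constructor
        · rintro ⟨hxC, rfl | rfl⟩
          · rfl
          · exact absurd hxC hbC
        · rintro rfl; exact ⟨haC, Or.inl rfl⟩
      rw [this, Finset.card_singleton]
    · rw [if_pos (hcross.mpr (Or.inr ⟨hbC, haC⟩)), if_neg (fun hc => haC (hboth.mp hc).1)]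
      have : C.toFinite.toFinset ∩ {a, b} = {b} := by
        ext x
        simp only [Finset.mem_inter, Finset.mem_insert, Finset.mem_singleton,
          Set.Finite.mem_toFinset]
        constructor
        · rintro ⟨hxC, rfl | rfl⟩
          · exact absurd hxC haC
          · rfl
        · rintro rfl; exact ⟨hbC, Or.inr rfl⟩
      rw [this, Finset.card_singleton]
    · rw [if_neg, if_neg (fun hc => haC (hboth.mp hc).1)]
      · have : C.toFinite.toFinset ∩ {a, b} = ∅ := by
          ext x
          simp only [Finset.mem_inter, Finset.mem_insert, Finset.mem_singleton,
            Set.Finite.mem_toFinset, Finset.notMem_empty, iff_false, not_and]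
          rintro hxC (rfl | rfl)
          · exact haC hxC
          · exact hbC hxC
        rw [this, Finset.card_empty]
      · rw [hcross]; push_neg; exact ⟨fun h => absurd h haC, fun h => absurd h hbC⟩
  rw [Finset.sum_congr rfl (fun f _ => hpt f), Finset.sum_add_distrib]
  have h1 : (∑ f : E, if f ∈ crossF ends C then 1 else 0) = (crossF ends C).card := by
    rw [Finset.sum_ite_mem, Finset.univ_inter, Finset.sum_const, smul_eq_mul, mul_one]
  have h2 : (∑ f : E, if f ∈ bothF ends C then 2 else 0) = 2 * (bothF ends C).card := by
    rw [Finset.sum_ite_mem, Finset.univ_inter, Finset.sum_const, smul_eq_mul, mul_comm]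
  rw [h1, h2]
end Counting


section Glue
variable {V E : Type} [Fintype V] [Fintype E]

def mgRel (ends : E → Sym2 V) (e : E) : V → V → Prop :=
  fun u v => u ≠ v ∧ ∃ f, f ≠ e ∧ ends f = s(u, v)

lemma mgRel_symm (ends : E → Sym2 V) (e : E) : Symmetric (mgRel ends e) := by
  rintro u v ⟨hne, f, hf, hends⟩
  exact ⟨hne.symm, f, hf, hends.trans Sym2.eq_swap⟩

lemma cross_card_parity {ends : E → Sym2 V} (hl : Mg.NoLoops ends) (hc : Mg.IsCubic ends)
    {C : Set V} (hodd : Odd C.ncard) : Odd (crossF ends C).card := by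
  classical
  have hds := degree_sum ends hl C
  have hdeg : ∀ v : V, (Finset.univ.filter (fun f => v ∈ ends f)).card = 3 := by
    intro v
    have h3 := hc v
    rw [Set.ncard_eq_toFinset_card'] at h3
    rw [← h3]
    congr 1
    ext f
    simp [Set.mem_toFinset]
  rw [Finset.sum_congr rfl (fun v _ => hdeg v), Finset.sum_const, smul_eq_mul, mul_comm] at hds
  have hcc : C.toFinite.toFinset.card = C.ncard := (Set.ncard_eq_toFinset_card _ _).symm
  rw [hcc] at hds
  obtain ⟨k, hk⟩ := hodd
  rw [Nat.odd_iff]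
  omega

lemma cross_card_ne_one {ends : E → Sym2 V} (hb : Mg.Bridgeless ends) (C : Set V) :
    (crossF ends C).card ≠ 1 := by
  classical
  intro h1
  obtain ⟨f₀, hf₀⟩ := Finset.card_eq_one.mp h1
  have hf₀c : f₀ ∈ crossF ends C := hf₀ ▸ Finset.mem_singleton_self f₀
  obtain ⟨a, b, hab, haC, hbC⟩ := mem_crossF.mp hf₀c
  have hreach := hb f₀ a b hab
  have key : ∀ w, Mg.Reach ends {g | g ≠ f₀} a w → w ∈ C := by
    intro w hw
    induction hw with
    | refl => exact haC
    | tail _ hstep ih =>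
      obtain ⟨g, hg, hge⟩ := hstep
      by_contra hwC
      have : g ∈ crossF ends C := cross_of_ends hge ih hwC
      rw [hf₀] at this
      exact hg (Finset.mem_singleton.mp this)
  exact hbC (key b hreach)

lemma mg_tutteCond {ends : E → Sym2 V} (hl : Mg.NoLoops ends) (hc : Mg.IsCubic ends)
    (hb : Mg.Bridgeless ends) (e : E) : AtutteCond (mgRel ends e) (Set.univ) := by
  classical
  intro T _
  set R := mgRel ends e with hR
  have hsym : Symmetric R := mgRel_symm ends e
  set O := Aodds R (Set.univ \ T) with hO
  set OF := O.toFinite.toFinset with hOF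
  have hmemOF : ∀ C, C ∈ OF ↔ C ∈ O := fun C => Set.Finite.mem_toFinset _
  -- closure: a crossing edge of a component, other than e, touches T
  have hclose : ∀ C ∈ O, ∀ g, g ∈ crossF ends C → g ≠ e → ∃ a b, ends g = s(a, b) ∧ a ∈ C ∧ b ∈ T := by
    intro C hC g hg hge
    obtain ⟨a, b, hab, haC, hbC⟩ := mem_crossF.mp hg
    obtain ⟨w, hw, hCw⟩ := hC.1
    have hCsub : C ⊆ Set.univ \ T := by rw [hCw]; exact Acmp_subset _ hw
    refine ⟨a, b, hab, haC, ?_⟩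
    by_contra hbT
    have hab' : a ≠ b := fun hc => hbC (hc ▸ haC)
    have hstep : Astep R (Set.univ \ T) a b :=
      ⟨hCsub haC, ⟨trivial, hbT⟩, hab', g, hge, hab⟩
    have haw : a ∈ Acmp R (Set.univ \ T) w := by rw [← hCw]; exact haC
    have : b ∈ Acmp R (Set.univ \ T) a := Relation.ReflTransGen.single hstep
    rw [Acmp_eq_of_mem hsym haw, ← hCw] at this
    exact hbC this
  -- each component's crossing set has card ≥ 3
  have h3 : ∀ C ∈ O, 3 ≤ (crossF ends C).card := by
    intro C hC
    have hodd := cross_card_parity hl hc hC.2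
    have hne1 := cross_card_ne_one hb C
    obtain ⟨k, hk⟩ := hodd
    omega
  -- the reduced cuts
  set cutm : Set V → Finset E := fun C => (crossF ends C).erase e with hcutm
  -- touching edges
  set TE : Finset E := Finset.univ.filter (fun g => ∃ t ∈ T, t ∈ ends g) with hTE
  have hTEcard : TE.card ≤ 3 * T.ncard := by
    have hsub : TE ⊆ T.toFinite.toFinset.biUnion
        (fun t => Finset.univ.filter (fun g => t ∈ ends g)) := by
      intro g hg
      rw [hTE, Finset.mem_filter] at hg
      obtain ⟨t, ht, htg⟩ := hg.2
      rw [Finset.mem_biUnion]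
      exact ⟨t, by rw [Set.Finite.mem_toFinset]; exact ht, Finset.mem_filter.mpr ⟨Finset.mem_univ _, htg⟩⟩
    calc TE.card ≤ _ := Finset.card_le_card hsub
      _ ≤ ∑ t ∈ T.toFinite.toFinset, (Finset.univ.filter (fun g => t ∈ ends g)).card :=
          Finset.card_biUnion_le
      _ = ∑ t ∈ T.toFinite.toFinset, 3 := by
          apply Finset.sum_congr rfl
          intro t _
          have h3' := hc t
          rw [Set.ncard_eq_toFinset_card'] at h3'
          rw [← h3']
          congr 1
          ext f
          simp [Set.mem_toFinset]
      _ = 3 * T.ncard := by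
          rw [Finset.sum_const, smul_eq_mul, mul_comm, Set.ncard_eq_toFinset_card _ T.toFinite]
  -- cuts are inside TE
  have hcutTE : ∀ C ∈ OF, cutm C ⊆ TE := by
    intro C hC g hg
    rw [hcutm] at hg
    have hge := Finset.ne_of_mem_erase hg
    have hgc := Finset.mem_of_mem_erase hg
    obtain ⟨a, b, hab, _, hbT⟩ := hclose C ((hmemOF C).mp hC) g hgc hge
    rw [hTE, Finset.mem_filter]
    exact ⟨Finset.mem_univ _, b, hbT, by rw [hab]; exact Sym2.mem_mk_right a b⟩
  -- cuts are pairwise disjoint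
  have hcutdisj : ∀ C₁ ∈ OF, ∀ C₂ ∈ OF, C₁ ≠ C₂ → Disjoint (cutm C₁) (cutm C₂) := by
    intro C₁ h₁ C₂ h₂ hne
    have hdC := odds_disjoint hsym ((hmemOF C₁).mp h₁) ((hmemOF C₂).mp h₂) hne
    rw [Finset.disjoint_left]
    intro g hg₁ hg₂
    have hge := Finset.ne_of_mem_erase hg₁
    obtain ⟨a, b, hab, haC, hbT⟩ := hclose C₁ ((hmemOF C₁).mp h₁) g (Finset.mem_of_mem_erase hg₁) hge
    obtain ⟨a', b', hab', haC', hbT'⟩ := hclose C₂ ((hmemOF C₂).mp h₂) g (Finset.mem_of_mem_erase hg₂) hge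
    rw [hab] at hab'
    obtain ⟨w, hw, hCw⟩ := ((hmemOF C₂).mp h₂).1
    have hC₂sub : C₂ ⊆ Set.univ \ T := by rw [hCw]; exact Acmp_subset _ hw
    rcases Sym2.eq_iff.mp hab' with ⟨rfl, rfl⟩ | ⟨rfl, rfl⟩
    · exact Set.disjoint_left.mp hdC haC haC'
    · exact (hC₂sub haC').2 hbT
  -- lower bound on each cut
  have hcutlow : ∀ C ∈ OF, 3 ≤ (cutm C).card + (if e ∈ crossF ends C then 1 else 0) := by
    intro C hC
    have := h3 C ((hmemOF C).mp hC)
    by_cases hec : e ∈ crossF ends C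
    · rw [if_pos hec, hcutm]
      simp only
      rw [Finset.card_erase_of_mem hec]
      omega
    · rw [if_neg hec, hcutm]
      simp only
      rw [Finset.erase_eq_of_notMem hec]
      omega
  -- at most two components contain an endpoint of e
  have hex : (OF.filter (fun C => e ∈ crossF ends C)).card ≤ 2 := by
    obtain ⟨p, q, hpq⟩ := sym2_rep (ends e)
    have hsub : OF.filter (fun C => e ∈ crossF ends C)
        ⊆ OF.filter (fun C => p ∈ C) ∪ OF.filter (fun C => q ∈ C) := by
      intro C hC
      rw [Finset.mem_filter] at hC
      obtain ⟨a, b, hab, haC, _⟩ := mem_crossF.mp hC.2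
      rw [hpq] at hab
      rw [Finset.mem_union, Finset.mem_filter, Finset.mem_filter]
      rcases Sym2.eq_iff.mp hab with ⟨rfl, rfl⟩ | ⟨rfl, rfl⟩
      · exact Or.inl ⟨hC.1, haC⟩
      · exact Or.inr ⟨hC.1, haC⟩
    have hone : ∀ x, (OF.filter (fun C => x ∈ C)).card ≤ 1 := by
      intro x
      apply Finset.card_le_one.mpr
      intro C₁ h₁ C₂ h₂
      rw [Finset.mem_filter] at h₁ h₂
      by_contra hne
      exact Set.disjoint_left.mp
        (odds_disjoint hsym ((hmemOF C₁).mp h₁.1) ((hmemOF C₂).mp h₂.1) hne) h₁.2 h₂.2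
    calc (OF.filter (fun C => e ∈ crossF ends C)).card
        ≤ _ := Finset.card_le_card hsub
      _ ≤ (OF.filter (fun C => p ∈ C)).card + (OF.filter (fun C => q ∈ C)).card :=
          Finset.card_union_le _ _
      _ ≤ 2 := by have := hone p; have := hone q; omega
  -- assemble
  have hsum1 : ∑ C ∈ OF, (cutm C).card ≤ TE.card := by
    rw [← Finset.card_biUnion hcutdisj]
    apply Finset.card_le_card
    intro g hg
    rw [Finset.mem_biUnion] at hg
    obtain ⟨C, hC, hgC⟩ := hg
    exact hcutTE C hC hgC
  have hsum2 : 3 * OF.card ≤ ∑ C ∈ OF, (cutm C).card + 2 := by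
    have := Finset.sum_le_sum (fun C hC => hcutlow C hC)
    rw [Finset.sum_const, smul_eq_mul, mul_comm] at this
    rw [Finset.sum_add_distrib] at this
    have heq : (∑ C ∈ OF, if e ∈ crossF ends C then 1 else 0)
        = (OF.filter (fun C => e ∈ crossF ends C)).card := by
      rw [Finset.card_filter]
    omega
  have hOcard : O.ncard = OF.card := Set.ncard_eq_toFinset_card _ _
  rw [hOcard]
  omega
end Glue

theorem stmt1' {V E : Type} [Fintype V] [Fintype E] (ends : E → Sym2 V)
    (hl : Mg.NoLoops ends) (hc : Mg.IsCubic ends) (hb : Mg.Bridgeless ends) :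
    ∀ e : E, ∃ M : Set E, (∀ v, ∃! f, f ∈ M ∧ v ∈ ends f) ∧ e ∉ M := by
  intro e
  classical
  set R := mgRel ends e with hR
  have hsym := mgRel_symm ends e
  have hcond : AtutteCond R Set.univ := mg_tutteCond hl hc hb e
  obtain ⟨m, hm⟩ := Atutte hsym (Set.univ : Set V).ncard Set.univ le_rfl hcond
  have hm' : ∀ v : V, R v (m v) ∧ m (m v) = v := fun v => ⟨(hm v trivial).2.1, (hm v trivial).2.2⟩
  have hP : ∀ v : V, ∃ f, f ≠ e ∧ ends f = s(v, m v) := fun v => (hm' v).1.2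
  set pk : Sym2 V → E := fun p => if h : ∃ f, f ≠ e ∧ ends f = p then Classical.choose h else e
    with hpkdef
  have hpk1 : ∀ p (h : ∃ f, f ≠ e ∧ ends f = p), pk p ≠ e ∧ ends (pk p) = p := by
    intro p h
    rw [hpkdef]
    simp only [dif_pos h]
    exact Classical.choose_spec h
  set M : Set E := {f | ∃ v : V, f = pk s(v, m v)} with hM
  refine ⟨M, ?_, ?_⟩
  · intro v
    have hv := hpk1 _ (hP v)
    refine ⟨pk s(v, m v), ⟨⟨v, rfl⟩, by rw [hv.2]; exact Sym2.mem_mk_left _ _⟩, ?_⟩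
    rintro f' ⟨⟨w, rfl⟩, hvf'⟩
    have hw := hpk1 _ (hP w)
    rw [hw.2] at hvf'
    rcases Sym2.mem_iff.mp hvf' with rfl | hvm
    · rfl
    · have h1 : m v = w := by rw [hvm, (hm' w).2]
      rw [show s(w, m w) = s(v, m v) from by rw [← hvm, ← h1]; exact Sym2.eq_swap]
  · intro heM
    rw [hM] at heM
    obtain ⟨v, hv⟩ := heM
    exact (hpk1 _ (hP v)).1 hv.symm

theorem stmt1 {V E : Type} [Fintype V] [Fintype E] (ends : E → Sym2 V)
    (hl : Mg.NoLoops ends) (hc : Mg.IsCubic ends) (hb : Mg.Bridgeless ends) :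
    ∀ e : E, ∃ M : Set E, Mg.IsPerfectMatching ends M ∧ e ∉ M := by
  exact stmt1' ends hl hc hb
end

section
/- Let G be a connected bridgeless cubic graph in which every 2-factor consists only of 5-cycles. Then G does not contain a 4-cycle and a triangle sharing an edge. -/
section Engine

variable {V : Type} (adj : V → V → Prop)

/-- One step of adjacency inside a vertex set `B`. -/
def EStep (B : Set V) (u w : V) : Prop := u ∈ B ∧ w ∈ B ∧ adj u w

/-- Reachability inside `B`. -/
def ERel (B : Set V) : V → V → Prop := Relation.ReflTransGen (EStep adj B)

/-- Connected component of `x` inside `B`. -/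
def Ecomp (B : Set V) (x : V) : Set V := {y | ERel adj B x y ∧ y ∈ B}

/-- The set of connected components of `B`. -/
def Ecomps (B : Set V) : Set (Set V) := {C | ∃ x ∈ B, C = Ecomp adj B x}

/-- Odd components. -/
def EoddComps (B : Set V) : Set (Set V) := {C | C ∈ Ecomps adj B ∧ Odd C.ncard}

/-- Tutte condition on `A`. -/
def ETutte (A : Set V) : Prop := ∀ S ⊆ A, (EoddComps adj (A \ S)).ncard ≤ S.ncard

/-- A perfect matching of the set `A`, as an involution. -/
def EPM (A : Set V) (m : V → V) : Prop :=
  ∀ v ∈ A, m v ∈ A ∧ adj v (m v) ∧ m (m v) = v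

variable {adj}

-- no-symm lemmas
lemma erel_mem {B : Set V} {x y : V} (h : ERel adj B x y) (hne : x ≠ y) : y ∈ B := by
  induction h with
  | refl => exact absurd rfl hne
  | tail _ h2 _ => exact h2.2.1

section basic
variable (hsym : Symmetric adj)
include hsym
set_option linter.unusedSectionVars false

lemma erel_symm {B : Set V} : Symmetric (ERel adj B) := by
  refine fun x y h => @Std.Symm.symm _ _ (@Relation.ReflTransGen.stdSymm _ _ ⟨?_⟩) x y h
  rintro u w ⟨hu, hw, h⟩
  exact ⟨hw, hu, hsym h⟩

lemma mem_ecomp_self {B : Set V} {x : V} (hx : x ∈ B) : x ∈ Ecomp adj B x :=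
  ⟨Relation.ReflTransGen.refl, hx⟩

lemma ecomp_subset {B : Set V} {x : V} : Ecomp adj B x ⊆ B := fun _ h => h.2

lemma ecomp_eq_of_mem {B : Set V} {x y : V} (h : y ∈ Ecomp adj B x) :
    Ecomp adj B y = Ecomp adj B x := by
  ext z
  constructor
  · rintro ⟨hr, hz⟩; exact ⟨h.1.trans hr, hz⟩
  · rintro ⟨hr, hz⟩; exact ⟨(erel_symm hsym h.1).trans hr, hz⟩

lemma ecomps_disjoint {B : Set V} {C C' : Set V} (hC : C ∈ Ecomps adj B)
    (hC' : C' ∈ Ecomps adj B) {x : V} (hx : x ∈ C) (hx' : x ∈ C') : C = C' := by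
  obtain ⟨u, hu, rfl⟩ := hC
  obtain ⟨u', hu', rfl⟩ := hC'
  rw [← ecomp_eq_of_mem hsym hx, ← ecomp_eq_of_mem hsym hx']

lemma ecomps_nonempty {B : Set V} {C : Set V} (hC : C ∈ Ecomps adj B) : C.Nonempty := by
  obtain ⟨x, hx, rfl⟩ := hC
  exact ⟨x, mem_ecomp_self hsym hx⟩

lemma sUnion_ecomps {B : Set V} : ⋃₀ (Ecomps adj B) = B := by
  apply Set.Subset.antisymm
  · rintro y ⟨C, hC, hy⟩
    obtain ⟨x, hx, rfl⟩ := hC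
    exact hy.2
  · intro x hx
    exact ⟨Ecomp adj B x, ⟨x, hx, rfl⟩, mem_ecomp_self hsym hx⟩

/-- Components are closed under adjacency within `B`. -/
lemma ecomp_closed {B : Set V} {C : Set V} (hC : C ∈ Ecomps adj B) {x y : V}
    (hx : x ∈ C) (hy : y ∈ B) (hadj : adj x y) : y ∈ C := by
  obtain ⟨u, hu, rfl⟩ := hC
  exact ⟨hx.1.tail ⟨hx.2, hy, hadj⟩, hy⟩

/-- A component of a smaller set which is adjacency-closed in a bigger set is a
component of the bigger set. -/
lemma ecomp_transfer {B B' : Set V} (hBB : B' ⊆ B) {C : Set V} (hC : C ∈ Ecomps adj B')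
    (hcl : ∀ x ∈ C, ∀ y ∈ B, adj x y → y ∈ C) : C ∈ Ecomps adj B := by
  obtain ⟨x, hx, rfl⟩ := hC
  refine ⟨x, hBB hx, Set.Subset.antisymm ?_ ?_⟩
  · rintro y ⟨hr, hy⟩
    exact ⟨Relation.ReflTransGen.mono (fun u w (h : EStep adj B' u w) => (⟨hBB h.1, hBB h.2.1, h.2.2⟩ : EStep adj B u w)) _ _ hr, hBB hy⟩
  · rintro y ⟨hr, hy⟩
    -- induct along the path in `B`, showing it stays in `Ecomp adj B' x`
    clear hy
    induction hr with
    | refl => exact mem_ecomp_self hsym hx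
    | tail _ h2 ih =>
      rename_i b c _
      have hbC : b ∈ Ecomp adj B' x := ih
      have := hcl b hbC c h2.2.1 h2.2.2
      exact this
end basic

end Engine

open Finset in
lemma sum_mod_two {α : Type*} [DecidableEq α] (s : Finset α) (f : α → ℕ) :
    (∑ a ∈ s, f a) % 2 = (s.filter (fun a => Odd (f a))).card % 2 := by
  classical
  induction s using Finset.induction_on with
  | empty => simp
  | insert a s hx ih =>
    rw [Finset.sum_insert hx, Finset.filter_insert]
    by_cases h : Odd (f a)
    · rw [if_pos h, Finset.card_insert_of_notMem (by simp [hx])]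
      have := Nat.odd_iff.mp h
      omega
    · rw [if_neg h]
      have := Nat.not_odd_iff_even.mp h
      obtain ⟨k, hk⟩ := this
      omega

lemma ncard_sUnion_finset {V : Type} (s : Finset (Set V)) (hfin : ∀ C ∈ s, C.Finite)
    (h : ∀ C ∈ s, ∀ D ∈ s, C ≠ D → Disjoint C D) :
    (⋃₀ (s : Set (Set V))).ncard = ∑ C ∈ s, C.ncard := by
  classical
  induction s using Finset.induction_on with
  | empty => simp
  | insert C s hx ih =>
    rw [Finset.coe_insert, Set.sUnion_insert, Finset.sum_insert hx]
    have hdisj : Disjoint C (⋃₀ (s : Set (Set V))) := by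
      apply Set.disjoint_sUnion_right.mpr
      intro D hD
      exact h C (Finset.mem_insert_self _ _) D (Finset.mem_insert_of_mem hD)
        (fun hCD => hx (hCD ▸ hD))
    rw [Set.ncard_union_eq hdisj (hfin C (Finset.mem_insert_self _ _))
      (Set.Finite.sUnion (Set.finite_coe_iff.mp inferInstance) (by
        intro D hD; exact hfin D (Finset.mem_insert_of_mem hD)))]
    rw [ih (fun D hD => hfin D (Finset.mem_insert_of_mem hD))
      (fun D hD E hE hDE => h D (Finset.mem_insert_of_mem hD) E (Finset.mem_insert_of_mem hE) hDE)]

section Engine2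

variable {V : Type} {adj : V → V → Prop} (hsym : Symmetric adj)
include hsym
set_option linter.unusedSectionVars false

lemma erel_restrict {B D : Set V} {x y : V} (h : ERel adj B x y)
    (hcomp : ∀ z, ERel adj B x z → z ∉ D) : ERel adj (B \ D) x y := by
  induction h with
  | refl => exact Relation.ReflTransGen.refl
  | tail hab hbc ih =>
    rename_i b c
    exact Relation.ReflTransGen.tail ih
      ⟨⟨hbc.1, hcomp b hab⟩, ⟨hbc.2.1, hcomp c (hab.tail hbc)⟩, hbc.2.2⟩

lemma ecomps_restrict {B D C : Set V} (hC : C ∈ Ecomps adj B) (hdisj : C ∩ D = ∅) :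
    C ∈ Ecomps adj (B \ D) := by
  obtain ⟨x, hx, rfl⟩ := hC
  have hxD : x ∉ D := fun h => by
    have : x ∈ Ecomp adj B x ∩ D := ⟨mem_ecomp_self hsym hx, h⟩
    simp [hdisj] at this
  refine ⟨x, ⟨hx, hxD⟩, Set.Subset.antisymm ?_ ?_⟩
  · rintro y ⟨hr, hy⟩
    have hyD : y ∉ D := fun h => by
      have : y ∈ Ecomp adj B x ∩ D := ⟨⟨hr, hy⟩, h⟩
      simp [hdisj] at this
    refine ⟨erel_restrict hsym hr ?_, hy, hyD⟩
    intro z hz hzD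
    by_cases hzx : z = x
    · exact hxD (hzx ▸ hzD)
    · have : z ∈ Ecomp adj B x ∩ D := ⟨⟨hz, erel_mem hz (Ne.symm hzx)⟩, hzD⟩
      simp [hdisj] at this
  · rintro y ⟨hr, hy, _⟩
    exact ⟨Relation.ReflTransGen.mono (fun u w (h' : EStep adj (B \ D) u w) => (⟨h'.1.1, h'.2.1.1, h'.2.2⟩ : EStep adj B u w)) _ _ hr, hy⟩

variable [Fintype V]

lemma ecomps_ncard_sum (B : Set V) :
    B.ncard = ∑ C ∈ (Set.toFinite (Ecomps adj B)).toFinset, C.ncard := by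
  classical
  have h1 : ⋃₀ (((Set.toFinite (Ecomps adj B)).toFinset : Finset (Set V)) : Set (Set V)) = B := by
    rw [Set.Finite.coe_toFinset]; exact sUnion_ecomps hsym
  have hsum := ncard_sUnion_finset ((Set.toFinite (Ecomps adj B)).toFinset)
    (fun C _ => Set.toFinite C) ?_
  · rw [h1] at hsum; exact hsum
  · intro C hC D hD hne
    rw [Set.Finite.mem_toFinset] at hC hD
    rw [Set.disjoint_iff_inter_eq_empty]
    by_contra hne'
    obtain ⟨x, hx⟩ := Set.nonempty_iff_ne_empty.mpr hne'
    exact hne (ecomps_disjoint hsym hC hD hx.1 hx.2)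

lemma ecomps_subset {B C : Set V} (hC : C ∈ Ecomps adj B) : C ⊆ B := by
  obtain ⟨x, _, rfl⟩ := hC
  exact ecomp_subset hsym

lemma eodd_parity (B : Set V) : (EoddComps adj B).ncard % 2 = B.ncard % 2 := by
  classical
  rw [ecomps_ncard_sum hsym B, sum_mod_two]
  have : EoddComps adj B =
      ↑(((Set.toFinite (Ecomps adj B)).toFinset).filter (fun C => Odd C.ncard)) := by
    ext C
    simp [EoddComps, Ecomps, Set.Finite.mem_toFinset]
  rw [this, Set.ncard_coe_finset]

/-- Key counting lemma: pushing extra vertices `D ⊆ C` into the deleted set. -/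
lemma odd_lower {A S : Set V} {C : Set V} (hC : C ∈ Ecomps adj (A \ S)) {D : Set V}
    (hD : D ⊆ C) :
    ((EoddComps adj (A \ S)) \ {C}).ncard + (EoddComps adj (C \ D)).ncard
      ≤ (EoddComps adj (A \ (S ∪ D))).ncard := by
  classical
  have hsplit : A \ (S ∪ D) = (A \ S) \ D := by
    ext x; simp only [Set.mem_diff, Set.mem_union]; tauto
  rw [hsplit]
  set X := (EoddComps adj (A \ S)) \ {C} with hX
  set Y := EoddComps adj (C \ D) with hY
  have hXsub : X ⊆ EoddComps adj ((A \ S) \ D) := by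
    rintro K ⟨⟨hK, hodd⟩, hKC⟩
    refine ⟨ecomps_restrict hsym hK ?_, hodd⟩
    rw [Set.eq_empty_iff_forall_notMem]
    rintro x ⟨hxK, hxD⟩
    exact hKC (ecomps_disjoint hsym hK hC hxK (hD hxD))
  have hYsub : Y ⊆ EoddComps adj ((A \ S) \ D) := by
    rintro K ⟨hK, hodd⟩
    refine ⟨ecomp_transfer hsym ?_ hK ?_, hodd⟩
    · intro x hx
      exact ⟨ecomps_subset hsym hC hx.1, hx.2⟩
    · intro x hx y hy hadj
      have hxC : x ∈ C := (ecomps_subset hsym hK hx).1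
      have hyC : y ∈ C := ecomp_closed hsym hC hxC hy.1 hadj
      exact ecomp_closed hsym hK hx ⟨hyC, hy.2⟩ hadj
  have hdisjXY : Disjoint X Y := by
    rw [Set.disjoint_left]
    rintro K hKX hKY
    obtain ⟨x, hx⟩ := ecomps_nonempty hsym hKY.1
    have hxC : x ∈ C := (ecomps_subset hsym hKY.1 hx).1
    have : K = C := ecomps_disjoint hsym hKX.1.1 hC hx hxC
    exact hKX.2 (by simp [this])
  calc X.ncard + Y.ncard = (X ∪ Y).ncard :=
        (Set.ncard_union_eq hdisjXY (Set.toFinite _) (Set.toFinite _)).symm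
    _ ≤ _ := Set.ncard_le_ncard (Set.union_subset hXsub hYsub) (Set.toFinite _)

end Engine2

section EngineMain

variable {V : Type} {adj : V → V → Prop}

theorem engine [Fintype V] (hsym : Symmetric adj) :
    ∀ (A : Set V), ETutte adj A → ∃ m, EPM adj A m := by
  classical
  suffices H : ∀ (n : ℕ) (A : Set V), A.ncard = n → ETutte adj A → ∃ m, EPM adj A m by
    intro A hT; exact H A.ncard A rfl hT
  intro n
  induction n using Nat.strong_induction_on with
  | _ n IH =>
  intro A hcard hT
  rcases Set.eq_empty_or_nonempty A with rfl | ⟨v0, hv0⟩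
  · exact ⟨id, fun v hv => absurd hv (Set.notMem_empty v)⟩
  haveI : Nonempty V := ⟨v0⟩
  -- tight sets
  set Tight : Set V → Prop :=
    fun S => S ⊆ A ∧ (EoddComps adj (A \ S)).ncard = S.ncard with hTightdef
  have h0 : Tight ∅ := by
    refine ⟨Set.empty_subset A, ?_⟩
    have := hT ∅ (Set.empty_subset A)
    simp only [Set.ncard_empty] at this ⊢
    omega
  have hbdd : ∀ S, Tight S → S.ncard ≤ Fintype.card V := fun S _ => by
    have := Set.ncard_le_ncard (Set.subset_univ S) (Set.toFinite _)
    rwa [Set.ncard_univ, Nat.card_eq_fintype_card] at this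
  set P : ℕ → Prop := fun k => ∃ S, Tight S ∧ S.ncard = k with hPdef
  have hP0 : P 0 := ⟨∅, h0, by simp⟩
  have hPk0 : P (Nat.findGreatest P (Fintype.card V)) :=
    Nat.findGreatest_spec (Nat.zero_le _) hP0
  obtain ⟨S, hStight, hScard⟩ := hPk0
  have hmax : ∀ S', Tight S' → S'.ncard ≤ S.ncard := by
    intro S' hS'
    rw [hScard]
    exact Nat.le_findGreatest (hbdd S' hS') ⟨S', hS', rfl⟩
  clear hScard
  set B := A \ S with hBdef
  -- All components of B are odd
  have hallodd : ∀ C ∈ Ecomps adj B, Odd C.ncard := by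
    intro C hC
    by_contra heven
    obtain ⟨c, hc⟩ := ecomps_nonempty hsym hC
    have hcB : c ∈ B := ecomps_subset hsym hC hc
    have hco := odd_lower (A := A) (S := S) hsym hC (Set.singleton_subset_iff.mpr hc)
    rw [← hBdef] at hco
    have hd : (EoddComps adj B) \ {C} = EoddComps adj B :=
      Set.diff_singleton_eq_self (fun h => heven h.2)
    rw [hd] at hco
    have hpar := eodd_parity hsym (C \ {c})
    have hcc : (C \ {c}).ncard = C.ncard - 1 := Set.ncard_diff_singleton_of_mem hc
    have hCpos : 0 < C.ncard := (Set.ncard_pos (Set.toFinite _)).mpr ⟨c, hc⟩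
    have hodd1 : 1 ≤ (EoddComps adj (C \ {c})).ncard := by
      rw [hcc] at hpar
      obtain ⟨k, hk⟩ := Nat.not_odd_iff_even.mp heven
      omega
    have hsub : S ∪ {c} ⊆ A := Set.union_subset hStight.1
      (Set.singleton_subset_iff.mpr hcB.1)
    have hTle := hT (S ∪ {c}) hsub
    have hcS : c ∉ S := hcB.2
    have hcard2 : (S ∪ {c}).ncard = S.ncard + 1 := by
      rw [Set.union_singleton, Set.ncard_insert_of_notMem hcS]
    have hSe : (EoddComps adj B).ncard = S.ncard := hStight.2
    have htight2 : Tight (S ∪ {c}) := by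
      refine ⟨hsub, le_antisymm hTle ?_⟩
      rw [hcard2]
      omega
    have := hmax _ htight2
    omega
  -- Tutte condition inside components minus a vertex
  have hSpos : ∀ C ∈ Ecomps adj B, 1 ≤ S.ncard := by
    intro C hC
    rw [← hStight.2]
    exact (Set.ncard_pos (Set.toFinite _)).mpr ⟨C, hC, hallodd C hC⟩
  have hsubT : ∀ C ∈ Ecomps adj B, ∀ v ∈ C, ETutte adj (C \ {v}) := by
    intro C hC v hv T hTsub
    by_contra hlt
    push_neg at hlt
    have hpar := eodd_parity hsym ((C \ {v}) \ T)
    have hCodd : Odd C.ncard := hallodd C hC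
    have hvT : v ∉ T := fun h => (hTsub h).2 rfl
    have hTC : T ⊆ C := fun x hx => (hTsub hx).1
    have hc1 : (C \ {v}).ncard = C.ncard - 1 := Set.ncard_diff_singleton_of_mem hv
    have hc2 : ((C \ {v}) \ T).ncard = (C \ {v}).ncard - T.ncard := Set.ncard_diff hTsub
    have hTle' : T.ncard ≤ (C \ {v}).ncard := Set.ncard_le_ncard hTsub (Set.toFinite _)
    have hge2 : T.ncard + 2 ≤ (EoddComps adj ((C \ {v}) \ T)).ncard := by
      obtain ⟨k, hk⟩ := hCodd
      omega
    have hDC : {v} ∪ T ⊆ C := Set.union_subset (Set.singleton_subset_iff.mpr hv) hTC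
    have hco := odd_lower (A := A) (S := S) hsym hC hDC
    rw [← hBdef] at hco
    have hsplit : C \ ({v} ∪ T) = (C \ {v}) \ T := by
      ext x; simp only [Set.mem_diff, Set.mem_union, Set.mem_singleton_iff]; tauto
    rw [hsplit] at hco
    have hCoddmem : C ∈ EoddComps adj B := ⟨hC, hCodd⟩
    have hdd : ((EoddComps adj B) \ {C}).ncard = S.ncard - 1 := by
      rw [Set.ncard_diff_singleton_of_mem hCoddmem, hStight.2]
    have hS'sub : S ∪ ({v} ∪ T) ⊆ A :=
      Set.union_subset hStight.1 (fun x hx => (ecomps_subset hsym hC (hDC hx)).1)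
    have hTnew := hT _ hS'sub
    have hdisj : Disjoint S ({v} ∪ T) := by
      rw [Set.disjoint_right]
      intro x hx
      exact (ecomps_subset hsym hC (hDC hx)).2
    have hvTcard : ({v} ∪ T).ncard = T.ncard + 1 := by
      rw [Set.union_comm, Set.union_singleton, Set.ncard_insert_of_notMem hvT]
    have hcardS' : (S ∪ ({v} ∪ T)).ncard = S.ncard + T.ncard + 1 := by
      rw [Set.ncard_union_eq hdisj, hvTcard]; omega
    have hpos := hSpos C hC
    have hSe : (EoddComps adj B).ncard = S.ncard := hStight.2
    have htight2 : Tight (S ∪ ({v} ∪ T)) := by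
      refine ⟨hS'sub, le_antisymm hTnew ?_⟩
      rw [hcardS']
      omega
    have := hmax _ htight2
    rw [hcardS'] at this
    omega
  -- Hall's theorem
  set Cfin : Finset (Set V) := (Set.toFinite (Ecomps adj B)).toFinset with hCfindef
  have hmemCfin : ∀ C : Set V, C ∈ Cfin ↔ C ∈ Ecomps adj B := fun C =>
    Set.Finite.mem_toFinset _
  set t : Set V → Finset V :=
    fun C => (Set.toFinite {s | s ∈ S ∧ ∃ x ∈ C, adj x s}).toFinset with htdef
  have hmemt : ∀ C y, y ∈ t C ↔ (y ∈ S ∧ ∃ x ∈ C, adj x y) := fun C y =>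
    Set.Finite.mem_toFinset _
  have hcompscard : Cfin.card = S.ncard := by
    rw [← hStight.2]
    have : EoddComps adj B = Ecomps adj B :=
      Set.ext fun C => ⟨fun h => h.1, fun h => ⟨h, hallodd C h⟩⟩
    rw [this, Set.ncard_eq_toFinset_card (Ecomps adj B)]
  have hHall : ∀ (s : Finset {C // C ∈ Cfin}), s.card ≤ (s.biUnion (fun C => t C.1)).card := by
    intro s
    set N : Finset V := s.biUnion (fun C => t C.1) with hNdef
    have hNS : (↑N : Set V) ⊆ S := by
      intro x hx
      rw [Finset.coe_biUnion] at hx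
      simp only [Set.mem_iUnion] at hx
      obtain ⟨C, hCs, hx⟩ := hx
      exact ((hmemt C.1 x).mp hx).1
    have hrestr : ∀ C : {C // C ∈ Cfin}, C ∈ s → C.1 ∈ EoddComps adj (A \ ↑N) := by
      intro C hCs
      have hCc : C.1 ∈ Ecomps adj B := (hmemCfin C.1).mp C.2
      refine ⟨ecomp_transfer hsym ?_ hCc ?_, hallodd C.1 hCc⟩
      · intro x hx
        exact ⟨hx.1, fun hxN => hx.2 (hNS hxN)⟩
      · intro x hx y hy hadj
        by_cases hyS : y ∈ S
        · exfalso
          apply hy.2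
          have : y ∈ t C.1 := (hmemt C.1 y).mpr ⟨hyS, x, hx, hadj⟩
          exact Finset.mem_coe.mpr (Finset.mem_biUnion.mpr ⟨C, hCs, this⟩)
        · exact ecomp_closed hsym hCc hx ⟨hy.1, hyS⟩ hadj
    have himgcard : (s.image (fun C => C.1)).card = s.card :=
      Finset.card_image_of_injective s Subtype.val_injective
    have hsub2 : ↑(s.image (fun C => C.1)) ⊆ EoddComps adj (A \ (↑N : Set V)) := by
      intro C hC
      simp only [Finset.coe_image, Set.mem_image, Finset.mem_coe] at hC
      obtain ⟨C', hC's, rfl⟩ := hC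
      exact hrestr C' hC's
    calc s.card = (s.image (fun C => C.1)).card := himgcard.symm
      _ = (↑(s.image (fun C => C.1)) : Set (Set V)).ncard := (Set.ncard_coe_finset _).symm
      _ ≤ (EoddComps adj (A \ (↑N : Set V))).ncard :=
          Set.ncard_le_ncard hsub2 (Set.toFinite _)
      _ ≤ (↑N : Set V).ncard := hT _ (hNS.trans hStight.1)
      _ = N.card := Set.ncard_coe_finset _
  obtain ⟨φ, hφinj, hφmem⟩ :=
    (Finset.all_card_le_biUnion_card_iff_exists_injective (fun C : {C // C ∈ Cfin} => t C.1)).mp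
      hHall
  have hφS : ∀ C, φ C ∈ S := fun C => ((hmemt _ _).mp (hφmem C)).1
  -- surjectivity of φ onto S
  have hsurj : ∀ s ∈ S, ∃ C, φ C = s := by
    intro s hs
    set img : Finset V := Finset.univ.image φ with himgdef
    have h1 : img.card = Cfin.card := by
      rw [Finset.card_image_of_injective _ hφinj, Finset.card_univ, Fintype.card_coe]
    have h2 : img ⊆ (Set.toFinite S).toFinset := by
      intro x hx
      obtain ⟨C, _, rfl⟩ := Finset.mem_image.mp hx
      exact (Set.Finite.mem_toFinset _).mpr (hφS C)
    have h3 : img = (Set.toFinite S).toFinset := by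
      apply Finset.eq_of_subset_of_card_le h2
      rw [h1, hcompscard, Set.ncard_eq_toFinset_card S]
    have : s ∈ img := by
      rw [h3]
      exact (Set.Finite.mem_toFinset _).mpr hs
    obtain ⟨C, _, hC⟩ := Finset.mem_image.mp this
    exact ⟨C, hC⟩
  choose ψ hψ using hsurj
  -- representatives
  have hxC : ∀ C : {C // C ∈ Cfin}, ∃ x, x ∈ C.1 ∧ adj x (φ C) := by
    intro C
    obtain ⟨hS', x, hx, hadj⟩ := (hmemt _ _).mp (hφmem C)
    exact ⟨x, hx, hadj⟩
  choose xf hxf hadjxf using hxC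
  -- perfect matchings inside components
  have hPMC : ∀ C : {C // C ∈ Cfin}, ∃ m, EPM adj (C.1 \ {xf C}) m := by
    intro C
    have hCc : C.1 ∈ Ecomps adj B := (hmemCfin C.1).mp C.2
    have hCsubA : C.1 ⊆ A := fun x hx => (ecomps_subset hsym hCc hx).1
    have hlt : (C.1 \ {xf C}).ncard < n := by
      have h1 : (C.1 \ {xf C}).ncard = C.1.ncard - 1 :=
        Set.ncard_diff_singleton_of_mem (hxf C)
      have h2 : C.1.ncard ≤ n := hcard ▸ Set.ncard_le_ncard hCsubA (Set.toFinite _)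
      have h3 : 0 < C.1.ncard := (Set.ncard_pos (Set.toFinite _)).mpr ⟨xf C, hxf C⟩
      omega
    exact IH _ hlt _ rfl (hsubT C.1 hCc (xf C) (hxf C))
  choose mf hmf using hPMC
  -- component of a vertex
  have hcompof : ∀ v, v ∈ B → ∃ C : {C // C ∈ Cfin}, v ∈ C.1 := by
    intro v hv
    exact ⟨⟨Ecomp adj B v, (hmemCfin _).mpr ⟨v, hv, rfl⟩⟩, mem_ecomp_self hsym hv⟩
  choose cof hcof using hcompof
  have huniq : ∀ (v : V) (hv : v ∈ B) (C : {C // C ∈ Cfin}), v ∈ C.1 → cof v hv = C := by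
    intro v hv C hvC
    exact Subtype.ext (ecomps_disjoint hsym ((hmemCfin _).mp (cof v hv).2)
      ((hmemCfin _).mp C.2) (hcof v hv) hvC)
  -- the matching
  set m : V → V := fun v =>
    if hv : v ∈ B then
      (if v = xf (cof v hv) then φ (cof v hv) else mf (cof v hv) v)
    else if hs : v ∈ S then xf (ψ v hs) else v
    with hmdef
  have hCsubB : ∀ C : {C // C ∈ Cfin}, C.1 ⊆ B := fun C =>
    ecomps_subset hsym ((hmemCfin _).mp C.2)
  have hSnotB : ∀ s ∈ S, s ∉ B := fun s hs h => h.2 hs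
  -- value lemmas
  have hmB : ∀ (v : V) (hv : v ∈ B), v ≠ xf (cof v hv) → m v = mf (cof v hv) v := by
    intro v hv hne
    rw [hmdef]
    simp only [dif_pos hv, if_neg hne]
  have hmBx : ∀ (v : V) (hv : v ∈ B), v = xf (cof v hv) → m v = φ (cof v hv) := by
    intro v hv he
    rw [hmdef]
    simp only [dif_pos hv, if_pos he]
  have hmS : ∀ (v : V) (hv : v ∈ S), m v = xf (ψ v hv) := by
    intro v hv
    rw [hmdef]
    simp only [dif_neg (hSnotB v hv), dif_pos hv]
  refine ⟨m, ?_⟩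
  intro v hvA
  by_cases hv : v ∈ B
  · set C := cof v hv with hCdef
    by_cases hvx : v = xf C
    · -- matched across to φ C ∈ S
      have hmv : m v = φ C := hmBx v hv hvx
      have hφCS : φ C ∈ S := hφS C
      refine ⟨hmv ▸ hStight.1 hφCS, ?_, ?_⟩
      · rw [hmv, hvx]
        exact hadjxf C
      · rw [hmv, hmS (φ C) hφCS]
        have : ψ (φ C) hφCS = C := hφinj (hψ (φ C) hφCS)
        rw [this, ← hvx]
    · -- matched inside the component
      have hmv : m v = mf C v := hmB v hv hvx
      have hvC : v ∈ C.1 := hcof v hv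
      have hPM := hmf C
      have hvmem : v ∈ C.1 \ {xf C} := ⟨hvC, hvx⟩
      obtain ⟨hmvmem, hadjv, hinv⟩ := hPM v hvmem
      have hmvB : mf C v ∈ B := hCsubB C hmvmem.1
      refine ⟨hmv ▸ (hmvB.1), hmv ▸ hadjv, ?_⟩
      rw [hmv]
      have hC2 : cof (mf C v) hmvB = C := huniq _ hmvB C hmvmem.1
      have : m (mf C v) = mf C (mf C v) := by
        have hne2 : mf C v ≠ xf (cof (mf C v) hmvB) := by
          rw [hC2]; exact hmvmem.2
        rw [hmB _ hmvB hne2, hC2]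
      rw [this, hinv]
  · -- v ∈ S
    have hvS : v ∈ S := by
      by_contra hvS
      exact hv ⟨hvA, hvS⟩
    have hmv : m v = xf (ψ v hvS) := hmS v hvS
    set C := ψ v hvS with hCdef
    have hxB : xf C ∈ B := hCsubB C (hxf C)
    refine ⟨hmv ▸ (hxB.1), ?_, ?_⟩
    · rw [hmv]
      have := hadjxf C
      rw [hψ v hvS] at this
      exact hsym this
    · rw [hmv]
      have hC2 : cof (xf C) hxB = C := huniq _ hxB C (hxf C)
      have : m (xf C) = φ C := by
        rw [hmBx _ hxB (by rw [hC2]), hC2]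
      rw [this, hψ v hvS]

end EngineMain


namespace Mg
variable {V E : Type}

/-- Edges with exactly one end in `W` (given no loops). -/
def ecross (ends : E → Sym2 V) (W : Set V) : Set E :=
  {e | ∃ u w, ends e = s(u, w) ∧ u ∈ W ∧ w ∉ W}

/-- Edges with both ends in `W`. -/
def einside (ends : E → Sym2 V) (W : Set V) : Set E :=
  {e | ∀ u ∈ ends e, u ∈ W}

lemma ecross_symm_mem {ends : E → Sym2 V} {W : Set V} {e : E} :
    e ∈ ecross ends W ↔ e ∈ ecross ends Wᶜ := by
  constructor <;>
  · rintro ⟨u, w, he, hu, hw⟩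
    exact ⟨w, u, by rw [Sym2.eq_swap] at he; exact he, by simpa using hw, by simpa using hu⟩

lemma not_inside_of_cross {ends : E → Sym2 V} {W : Set V} {e : E} (h : e ∈ ecross ends W) :
    e ∉ einside ends W := by
  obtain ⟨u, w, he, hu, hw⟩ := h
  intro hin
  exact hw (hin w (by rw [he]; simp))

variable [Fintype V] [Fintype E]

/-- The fundamental degree count: `3|W| = 2·(inside edges) + (crossing edges)`. -/
lemma count3 {ends : E → Sym2 V} (hl : NoLoops ends) (hc : IsCubic ends) (W : Set V) :
    3 * W.ncard = 2 * (einside ends W).ncard + (ecross ends W).ncard := by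
  classical
  -- left side
  have h1 : ∑ v ∈ W.toFinset, ({e | v ∈ ends e}).ncard = 3 * W.ncard := by
    rw [Finset.sum_congr rfl (fun v _ => hc v), Finset.sum_const, smul_eq_mul,
      ← Set.ncard_eq_toFinset_card']
    ring
  -- switch to counting over edges
  have h2 : ∑ v ∈ W.toFinset, ({e | v ∈ ends e}).ncard
      = ∑ e : E, ((W.toFinset).filter (fun v => v ∈ ends e)).card := by
    have hv : ∀ v, ({e | v ∈ ends e}).ncard
        = ∑ e : E, (if v ∈ ends e then 1 else 0) := by
      intro v
      rw [← Finset.card_filter]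
      rw [← Set.ncard_coe_finset]
      congr 1
      ext e
      simp
    simp_rw [hv, Finset.card_filter]
    rw [Finset.sum_comm]
  -- classify each edge
  have h3 : ∀ e : E, ((W.toFinset).filter (fun v => v ∈ ends e)).card
      = (if e ∈ einside ends W then 2 else if e ∈ ecross ends W then 1 else 0) := by
    intro e
    have hnd : ¬ (ends e).IsDiag := hl e
    obtain ⟨x, y, hxy⟩ : ∃ x y, ends e = s(x, y) := by
      induction (ends e) using Sym2.inductionOn with
      | _ x y => exact ⟨x, y, rfl⟩
    rw [hxy] at hnd
    have hne : x ≠ y := by simpa using hnd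
    have hmemin : e ∈ einside ends W ↔ (x ∈ W ∧ y ∈ W) := by
      constructor
      · intro h
        exact ⟨h x (by rw [hxy]; simp), h y (by rw [hxy]; simp)⟩
      · rintro ⟨h1, h2⟩ u hu
        rw [hxy, Sym2.mem_iff] at hu
        rcases hu with rfl | rfl <;> assumption
    have hmemcr : e ∈ ecross ends W ↔ ((x ∈ W ∧ y ∉ W) ∨ (y ∈ W ∧ x ∉ W)) := by
      constructor
      · rintro ⟨u, w, he, hu, hw⟩
        rw [hxy, Sym2.eq_iff] at he
        rcases he with ⟨rfl, rfl⟩ | ⟨rfl, rfl⟩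
        · exact Or.inl ⟨hu, hw⟩
        · exact Or.inr ⟨hu, hw⟩
      · rintro (⟨h1, h2⟩ | ⟨h1, h2⟩)
        · exact ⟨x, y, hxy, h1, h2⟩
        · exact ⟨y, x, by rw [hxy, Sym2.eq_swap], h1, h2⟩
    have hfeq : (W.toFinset).filter (fun v => v ∈ ends e) = W.toFinset ∩ {x, y} := by
      ext v
      simp [hxy, Sym2.mem_iff]
    rw [hfeq]
    by_cases hx : x ∈ W <;> by_cases hy : y ∈ W
    · rw [if_pos (hmemin.mpr ⟨hx, hy⟩)]
      rw [Finset.inter_eq_right.mpr (by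
        intro v hv
        simp only [Finset.mem_insert, Finset.mem_singleton] at hv
        rcases hv with rfl | rfl <;> simp [hx, hy])]
      exact Finset.card_pair hne
    · rw [if_neg (fun h => hy (hmemin.mp h).2), if_pos (hmemcr.mpr (Or.inl ⟨hx, hy⟩))]
      have : W.toFinset ∩ {x, y} = {x} := by
        ext v
        simp only [Finset.mem_inter, Finset.mem_insert, Finset.mem_singleton,
          Set.mem_toFinset, Finset.mem_singleton]
        constructor
        · rintro ⟨hv, rfl | rfl⟩
          · rfl
          · exact absurd hv hy
        · rintro rfl
          exact ⟨hx, Or.inl rfl⟩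
      rw [this, Finset.card_singleton]
    · rw [if_neg (fun h => hx (hmemin.mp h).1), if_pos (hmemcr.mpr (Or.inr ⟨hy, hx⟩))]
      have : W.toFinset ∩ {x, y} = {y} := by
        ext v
        simp only [Finset.mem_inter, Finset.mem_insert, Finset.mem_singleton,
          Set.mem_toFinset, Finset.mem_singleton]
        constructor
        · rintro ⟨hv, rfl | rfl⟩
          · exact absurd hv hx
          · rfl
        · rintro rfl
          exact ⟨hy, Or.inr rfl⟩
      rw [this, Finset.card_singleton]
    · rw [if_neg (fun h => hx (hmemin.mp h).1), if_neg (fun h => by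
        rcases hmemcr.mp h with ⟨h1, _⟩ | ⟨h1, _⟩
        · exact hx h1
        · exact hy h1)]
      have : W.toFinset ∩ {x, y} = ∅ := by
        ext v
        simp only [Finset.mem_inter, Finset.mem_insert, Finset.mem_singleton,
          Set.mem_toFinset, Finset.notMem_empty, iff_false, not_and]
        intro hv
        rintro (rfl | rfl)
        · exact hx hv
        · exact hy hv
      rw [this, Finset.card_empty]
  have h4 : ∑ e : E, (if e ∈ einside ends W then 2 else if e ∈ ecross ends W then 1 else 0)
      = 2 * (einside ends W).ncard + (ecross ends W).ncard := by
    rw [← Finset.sum_filter_add_sum_filter_not Finset.univ (fun e => e ∈ einside ends W)]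
    have ha : ∑ e ∈ Finset.univ.filter (fun e => e ∈ einside ends W),
        (if e ∈ einside ends W then 2 else if e ∈ ecross ends W then 1 else 0)
        = 2 * (einside ends W).ncard := by
      rw [Finset.sum_congr rfl (fun e he => if_pos (Finset.mem_filter.mp he).2),
        Finset.sum_const, smul_eq_mul]
      rw [mul_comm]
      congr 1
      rw [Set.ncard_eq_toFinset_card']
      congr 1
      ext e
      simp
    have hb : ∑ e ∈ Finset.univ.filter (fun e => ¬ e ∈ einside ends W),
        (if e ∈ einside ends W then 2 else if e ∈ ecross ends W then 1 else 0)
        = (ecross ends W).ncard := by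
      rw [Finset.sum_congr rfl (fun e he => if_neg (Finset.mem_filter.mp he).2)]
      rw [← Finset.card_filter]
      rw [Set.ncard_eq_toFinset_card']
      congr 1
      ext e
      simp only [Finset.mem_filter, Finset.mem_univ, true_and, Set.mem_toFinset]
      exact ⟨fun h => h.2, fun h => ⟨not_inside_of_cross h, h⟩⟩
    rw [ha, hb]
  rw [← h1, h2, Finset.sum_congr rfl (fun e _ => h3 e), h4]

end Mg



namespace Mg
variable {V E : Type}

lemma reach_cross {ends : E → Sym2 V} {F : Set E} {W : Set V} {x y : V}
    (h : Reach ends F x y) (hx : x ∈ W) (hy : y ∉ W) :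
    ∃ f ∈ F, f ∈ ecross ends W := by
  have key : ∀ z, Reach ends F x z → (z ∈ W ∨ ∃ f ∈ F, f ∈ ecross ends W) := by
    intro z hz
    induction hz with
    | refl => exact Or.inl hx
    | tail hab hbc ih =>
      rename_i b c
      rcases ih with hbW | hf
      · by_cases hcW : c ∈ W
        · exact Or.inl hcW
        · obtain ⟨f, hfF, hfe⟩ := hbc
          exact Or.inr ⟨f, hfF, b, c, hfe, hbW, hcW⟩
      · exact Or.inr hf
  rcases key y h with h1 | h2
  · exact absurd h1 hy
  · exact h2

variable [Fintype V] [Fintype E]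

lemma even_card_V {ends : E → Sym2 V} (hl : NoLoops ends) (hc : IsCubic ends) :
    (Set.univ : Set V).ncard % 2 = 0 := by
  have h := count3 hl hc Set.univ
  have hcr : ecross ends (Set.univ : Set V) = ∅ := by
    rw [Set.eq_empty_iff_forall_notMem]
    rintro f ⟨u, w, he, hu, hw⟩
    exact hw (Set.mem_univ w)
  rw [hcr, Set.ncard_empty] at h
  omega

lemma two_le_cross {ends : E → Sym2 V} (hconn : Connected ends) (hb : Bridgeless ends)
    {W : Set V} (hW : W.Nonempty) (hWc : Wᶜ.Nonempty) : 2 ≤ (ecross ends W).ncard := by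
  obtain ⟨x, hx⟩ := hW
  obtain ⟨y, hy⟩ := hWc
  obtain ⟨f0, -, hf0⟩ := reach_cross (hconn x y) hx hy
  by_contra hcon
  push_neg at hcon
  have hsing : ∀ g ∈ ecross ends W, g = f0 := by
    intro g hg
    by_contra hne
    have : 1 < (ecross ends W).ncard :=
      (Set.one_lt_ncard (Set.toFinite _)).mpr ⟨g, hg, f0, hf0, hne⟩
    omega
  obtain ⟨u, w, he, hu, hw⟩ := hf0
  obtain ⟨f1, hf1ne, hf1cr⟩ := reach_cross (hb f0 u w he) hu hw
  exact hf1ne (hsing f1 hf1cr)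

lemma three_le_cross {ends : E → Sym2 V} (hl : NoLoops ends) (hc : IsCubic ends)
    (hconn : Connected ends) (hb : Bridgeless ends)
    {W : Set V} (hW : W.Nonempty) (hWc : Wᶜ.Nonempty) (hodd : Odd W.ncard) :
    3 ≤ (ecross ends W).ncard := by
  have h1 := count3 hl hc W
  have h2 := two_le_cross hconn hb hW hWc
  obtain ⟨k, hk⟩ := hodd
  omega

end Mg

open Classical in
lemma sum_ncard_le {ι α : Type} [Fintype α] (s : Finset ι) (f : ι → Set α) (T : Set α)
    (hsub : ∀ i ∈ s, f i ⊆ T)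
    (hdisj : ∀ i ∈ s, ∀ j ∈ s, i ≠ j → Disjoint (f i) (f j)) :
    ∑ i ∈ s, (f i).ncard ≤ T.ncard := by
  classical
  have h1 : ∑ i ∈ s, (f i).ncard = (s.biUnion (fun i => (f i).toFinset)).card := by
    rw [Finset.card_biUnion (fun i hi j hj hne => ?_)]
    · exact Finset.sum_congr rfl (fun i _ => Set.ncard_eq_toFinset_card' _)
    · exact Set.disjoint_toFinset.mpr (hdisj i hi j hj hne)
  rw [h1, Set.ncard_eq_toFinset_card' T]
  apply Finset.card_le_card
  intro x hx
  obtain ⟨i, hi, hxin⟩ := Finset.mem_biUnion.mp hx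
  exact Set.mem_toFinset.mpr (hsub i hi (Set.mem_toFinset.mp hxin))

namespace Mg

/-- Simple adjacency relation derived from the multigraph. -/
def madj (ends : E → Sym2 V) : V → V → Prop := fun u w => u ≠ w ∧ ∃ e, ends e = s(u, w)

lemma madj_symm {ends : E → Sym2 V} : Symmetric (madj ends) := by
  rintro u w ⟨hne, e, he⟩
  exact ⟨hne.symm, e, by rw [he, Sym2.eq_swap]⟩

variable [Fintype V] [Fintype E]

lemma tutte_verify {ends : E → Sym2 V} (hl : NoLoops ends) (hc : IsCubic ends)
    (hb : Bridgeless ends) (hconn : Connected ends) {a t : V} (hat : a ≠ t)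
    {eat : E} (heat : ends eat = s(t, a)) :
    ETutte (madj ends) {v | v ≠ a ∧ v ≠ t} := by
  classical
  intro S hS
  set A : Set V := {v | v ≠ a ∧ v ≠ t} with hA
  set B : Set V := A \ S with hB
  set T : Set V := S ∪ {a, t} with hT
  have hBT : ∀ v ∈ B, v ∉ T := by
    rintro v ⟨hvA, hvS⟩ hvT
    rcases hvT with hvS' | hv
    · exact hvS hvS'
    · rcases hv with rfl | rfl
      · exact hvA.1 rfl
      · exact hvA.2 rfl
  -- each crossing edge of a component goes to T
  have hcrossK : ∀ K ∈ Ecomps (madj ends) B, ∀ f ∈ ecross ends K,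
      ∃ u w, ends f = s(u, w) ∧ u ∈ K ∧ w ∈ T := by
    intro K hK f hf
    obtain ⟨u, w, he, hu, hw⟩ := hf
    refine ⟨u, w, he, hu, ?_⟩
    by_contra hwT
    have hwB : w ∈ B := by
      constructor
      · constructor
        · intro h; exact hwT (by rw [h]; exact Or.inr (Or.inl rfl))
        · intro h; exact hwT (by rw [h]; exact Or.inr (Or.inr rfl))
      · intro h; exact hwT (Or.inl h)
    have hne : u ≠ w := by
      intro h
      apply hl f
      rw [he, h]
      exact Sym2.mk_isDiag_iff.mpr rfl
    exact hw (ecomp_closed madj_symm hK hu hwB ⟨hne, f, he⟩)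
  have hKsub : ∀ K ∈ Ecomps (madj ends) B, ecross ends K ⊆ ecross ends T := by
    intro K hK f hf
    obtain ⟨u, w, he, hu, hw⟩ := hcrossK K hK f hf
    exact ⟨w, u, by rw [he, Sym2.eq_swap], hw, hBT u (ecomps_subset madj_symm hK hu)⟩
  have hKdisj : ∀ K ∈ Ecomps (madj ends) B, ∀ K' ∈ Ecomps (madj ends) B, K ≠ K' →
      Disjoint (ecross ends K) (ecross ends K') := by
    intro K hK K' hK' hne
    rw [Set.disjoint_left]
    intro f hf hf'
    obtain ⟨u, w, he, hu, hw⟩ := hcrossK K hK f hf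
    obtain ⟨u', w', he', hu', hw'⟩ := hcrossK K' hK' f hf'
    rw [he, Sym2.eq_iff] at he'
    rcases he' with ⟨rfl, rfl⟩ | ⟨rfl, rfl⟩
    · exact hne (ecomps_disjoint madj_symm hK hK' hu hu')
    · exact hBT w (ecomps_subset madj_symm hK' hu') hw
  -- counting
  set KF : Finset (Set V) := (Set.toFinite (EoddComps (madj ends) B)).toFinset with hKF
  have hKFmem : ∀ K, K ∈ KF ↔ K ∈ EoddComps (madj ends) B := fun K =>
    Set.Finite.mem_toFinset _
  have h3K : ∀ K ∈ KF, 3 ≤ (ecross ends K).ncard := by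
    intro K hK
    obtain ⟨hKc, hKodd⟩ := (hKFmem K).mp hK
    refine three_le_cross hl hc hconn hb (ecomps_nonempty madj_symm hKc) ⟨a, ?_⟩ hKodd
    intro haK
    exact (ecomps_subset madj_symm hKc haK).1.1 rfl
  have hsum : ∑ K ∈ KF, (ecross ends K).ncard ≤ (ecross ends T).ncard := by
    apply sum_ncard_le
    · intro K hK; exact hKsub K ((hKFmem K).mp hK).1
    · intro K hK K' hK' hne
      exact hKdisj K ((hKFmem K).mp hK).1 K' ((hKFmem K').mp hK').1 hne
  have hlow : 3 * KF.card ≤ ∑ K ∈ KF, (ecross ends K).ncard := by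
    calc 3 * KF.card = ∑ _K ∈ KF, 3 := by rw [Finset.sum_const, smul_eq_mul]; ring
      _ ≤ _ := Finset.sum_le_sum h3K
  have hcT := count3 hl hc T
  have hinT : 1 ≤ (einside ends T).ncard := by
    refine (Set.ncard_pos (Set.toFinite _)).mpr ⟨eat, ?_⟩
    intro u hu
    rw [heat, Sym2.mem_iff] at hu
    rcases hu with rfl | rfl
    · exact Or.inr (Or.inr rfl)
    · exact Or.inr (Or.inl rfl)
  have haS : a ∉ S := fun h => (hS h).1 rfl
  have htS : t ∉ S := fun h => (hS h).2 rfl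
  have hTcard : T.ncard = S.ncard + 2 := by
    rw [hT, Set.ncard_union_eq (by
      rw [Set.disjoint_right]
      rintro x (rfl | rfl) <;> assumption) (Set.toFinite _) (Set.toFinite _),
      Set.ncard_pair hat]
  have hAcard : A.ncard + 2 = (Set.univ : Set V).ncard := by
    have : A = Set.univ \ {a, t} := by
      ext v
      simp [hA]
    rw [this, Set.ncard_diff (Set.subset_univ _), Set.ncard_pair hat]
    have h2 : ({a, t} : Set V).ncard ≤ (Set.univ : Set V).ncard :=
      Set.ncard_le_ncard (Set.subset_univ _) (Set.toFinite _)
    rw [Set.ncard_pair hat] at h2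
    omega
  have hBcard : B.ncard + S.ncard = A.ncard := by
    rw [hB, Set.ncard_diff hS]
    have := Set.ncard_le_ncard hS (Set.toFinite A)
    omega
  have hpar := eodd_parity (adj := madj ends) madj_symm B
  have hVpar := even_card_V hl hc
  have hocard : (EoddComps (madj ends) B).ncard = KF.card :=
    Set.ncard_eq_toFinset_card _
  rw [hB] at hocard hpar hBcard ⊢
  omega

end Mg

namespace Mg
variable {V E : Type} [Fintype V] [Fintype E]

lemma exists_twofactor {ends : E → Sym2 V} (hl : NoLoops ends) (hc : IsCubic ends)
    (hb : Bridgeless ends) (hconn : Connected ends) {a t : V} (hat : a ≠ t)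
    {eat : E} (heat : ends eat = s(t, a)) :
    ∃ F : Set E, IsTwoFactor ends F ∧ eat ∉ F ∧
      ∀ e, e ∉ F → (e = eat ∨ (a ∉ ends e ∧ t ∉ ends e)) := by
  classical
  set A : Set V := {v | v ≠ a ∧ v ≠ t} with hA
  obtain ⟨m, hm⟩ := engine (madj_symm (ends := ends)) A (tutte_verify hl hc hb hconn hat heat)
  set pick : V → E := fun v => if h : ∃ f, ends f = s(v, m v) then h.choose else eat with hpick
  have hpickspec : ∀ v ∈ A, ends (pick v) = s(v, m v) := by
    intro v hv
    obtain ⟨-, hadj, -⟩ := hm v hv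
    rw [hpick]
    simp only
    rw [dif_pos hadj.2]
    exact hadj.2.choose_spec
  have hpickswap : ∀ v ∈ A, pick (m v) = pick v := by
    intro v hv
    obtain ⟨hmv, hadj, hinv⟩ := hm v hv
    have he : s(m v, m (m v)) = s(v, m v) := by
      rw [hinv, Sym2.eq_swap]
    rw [hpick]
    simp only
    rw [he]
  set M : Set E := insert eat (pick '' A) with hM
  have hK3 : ∀ v ∈ A, a ∉ ends (pick v) ∧ t ∉ ends (pick v) := by
    intro v hv
    rw [hpickspec v hv]
    obtain ⟨hmv, -, -⟩ := hm v hv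
    constructor
    · rw [Sym2.mem_iff]
      rintro (h | h)
      · exact hv.1 h.symm
      · exact hmv.1 h.symm
    · rw [Sym2.mem_iff]
      rintro (h | h)
      · exact hv.2 h.symm
      · exact hmv.2 h.symm
  have hK4 : ∀ v ∈ A, ∀ f ∈ M, v ∈ ends f → f = pick v := by
    intro v hv f hf hvf
    rcases hf with rfl | ⟨u, hu, rfl⟩
    · exfalso
      rw [heat, Sym2.mem_iff] at hvf
      rcases hvf with rfl | rfl
      · exact hv.2 rfl
      · exact hv.1 rfl
    · rw [hpickspec u hu, Sym2.mem_iff] at hvf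
      rcases hvf with rfl | rfl
      · rfl
      · rw [← hpickswap u hu]
  have hK5 : ∀ f ∈ M, (a ∈ ends f ∨ t ∈ ends f) → f = eat := by
    rintro f (rfl | ⟨u, hu, rfl⟩) haf
    · rfl
    · exfalso
      rcases haf with h | h
      · exact (hK3 u hu).1 h
      · exact (hK3 u hu).2 h
  -- the unique M-edge at each vertex
  have hfv : ∀ v : V, ∃ fv ∈ M, v ∈ ends fv ∧ ∀ f ∈ M, v ∈ ends f → f = fv := by
    intro v
    by_cases hv : v ∈ A
    · refine ⟨pick v, Set.mem_insert_of_mem _ ⟨v, hv, rfl⟩, ?_, fun f hf hvf => hK4 v hv f hf hvf⟩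
      rw [hpickspec v hv, Sym2.mem_iff]
      exact Or.inl rfl
    · have hv' : v = a ∨ v = t := by
        by_contra hcon
        push_neg at hcon
        exact hv ⟨hcon.1, hcon.2⟩
      refine ⟨eat, Set.mem_insert _ _, ?_, ?_⟩
      · rw [heat, Sym2.mem_iff]
        rcases hv' with rfl | rfl
        · exact Or.inr rfl
        · exact Or.inl rfl
      · intro f hf hvf
        apply hK5 f hf
        rcases hv' with rfl | rfl
        · exact Or.inl hvf
        · exact Or.inr hvf
  refine ⟨{e | e ∉ M}, ?_, ?_, ?_⟩
  · -- two-factor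
    intro v
    obtain ⟨fv, hfvM, hfvinc, hfvuniq⟩ := hfv v
    have hset : {e | e ∈ {e | e ∉ M} ∧ v ∈ ends e} = {e | v ∈ ends e} \ {fv} := by
      ext e
      simp only [Set.mem_setOf_eq, Set.mem_diff, Set.mem_singleton_iff]
      constructor
      · rintro ⟨heM, hev⟩
        exact ⟨hev, fun h => heM (h ▸ hfvM)⟩
      · rintro ⟨hev, hne⟩
        exact ⟨fun heM => hne (hfvuniq e heM hev), hev⟩
    rw [hset, Set.ncard_diff_singleton_of_mem (show fv ∈ {e | v ∈ ends e} from hfvinc), hc v]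
  · simp only [Set.mem_setOf_eq, not_not]
    exact Set.mem_insert _ _
  · intro e he
    simp only [Set.mem_setOf_eq, not_not] at he
    rcases he with rfl | ⟨u, hu, rfl⟩
    · exact Or.inl rfl
    · exact Or.inr (hK3 u hu)

end Mg

-- small set lemmas
section SetLemmas
variable {α : Type} [Fintype α]

lemma three_eq {S : Set α} {x y z : α} (hx : x ∈ S) (hy : y ∈ S) (hz : z ∈ S)
    (hxy : x ≠ y) (hxz : x ≠ z) (hyz : y ≠ z) (hS : S.ncard = 3) : S = {x, y, z} := by
  have hsub : ({x, y, z} : Set α) ⊆ S := by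
    rintro u (rfl | rfl | rfl) <;> assumption
  have hcard : ({x, y, z} : Set α).ncard = 3 := by
    rw [Set.ncard_insert_of_notMem (by simp [hxy, hxz]),
      Set.ncard_insert_of_notMem (by simp [hyz]), Set.ncard_singleton]
  exact (Set.eq_of_subset_of_ncard_le hsub (by omega) (Set.toFinite _)).symm

lemma third_elem {S : Set α} {x y : α} (hx : x ∈ S) (hy : y ∈ S) (hxy : x ≠ y)
    (hS : S.ncard = 3) : ∃ z, z ≠ x ∧ z ≠ y ∧ S = {x, y, z} := by
  have hsub : ({x, y} : Set α) ⊆ S := by rintro u (rfl | rfl) <;> assumption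
  have hd : (S \ {x, y}).ncard = 1 := by
    rw [Set.ncard_diff hsub, Set.ncard_pair hxy, hS]
  obtain ⟨z, hz⟩ := Set.ncard_eq_one.mp hd
  have hzS : z ∈ S \ ({x, y} : Set α) := by rw [hz]; rfl
  refine ⟨z, fun h => hzS.2 (by simp [h]), fun h => hzS.2 (by simp [h]), ?_⟩
  exact three_eq hx hy hzS.1 hxy (fun h => hzS.2 (by simp [← h]))
    (fun h => hzS.2 (by simp [← h])) hS

lemma two_eq {S : Set α} {x y : α} (hx : x ∈ S) (hy : y ∈ S) (hxy : x ≠ y)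
    (hS : S.ncard = 2) : S = {x, y} := by
  have hsub : ({x, y} : Set α) ⊆ S := by rintro u (rfl | rfl) <;> assumption
  have hcard : ({x, y} : Set α).ncard = 2 := Set.ncard_pair hxy
  exact (Set.eq_of_subset_of_ncard_le hsub (by omega) (Set.toFinite _)).symm

lemma three_in_two {S : Set α} {x y z : α} (hx : x ∈ S) (hy : y ∈ S) (hz : z ∈ S)
    (hxy : x ≠ y) (hxz : x ≠ z) (hyz : y ≠ z) (hS : S.ncard = 2) : False := by
  have hsub : ({x, y, z} : Set α) ⊆ S := by rintro u (rfl | rfl | rfl) <;> assumption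
  have hcard : ({x, y, z} : Set α).ncard = 3 := by
    rw [Set.ncard_insert_of_notMem (by simp [hxy, hxz]),
      Set.ncard_insert_of_notMem (by simp [hyz]), Set.ncard_singleton]
  have := Set.ncard_le_ncard hsub (Set.toFinite _)
  omega

end SetLemmas

namespace Mg
variable {V E : Type}

lemma mem_ends_orient {ends : E → Sym2 V} {f : E} {v : V} (h : v ∈ ends f) :
    ∃ u, ends f = s(v, u) := by
  obtain ⟨x, y, hxy⟩ : ∃ x y, ends f = s(x, y) := by
    induction (ends f) using Sym2.inductionOn with
    | _ x y => exact ⟨x, y, rfl⟩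
  rw [hxy, Sym2.mem_iff] at h
  rcases h with rfl | rfl
  · exact ⟨y, hxy⟩
  · exact ⟨x, by rw [hxy, Sym2.eq_swap]⟩

lemma mem_component_self (ends : E → Sym2 V) (F : Set E) (v : V) :
    v ∈ component ends F v := Relation.ReflTransGen.refl

lemma comp_step {ends : E → Sym2 V} {F : Set E} {v x y : V} {f : E}
    (hx : x ∈ component ends F v) (hf : f ∈ F) (he : ends f = s(x, y)) :
    y ∈ component ends F v :=
  Relation.ReflTransGen.tail hx ⟨f, hf, he⟩

lemma component_subset {ends : E → Sym2 V} {F : Set E} {v : V} {W0 : Set V}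
    (hv : v ∈ W0) (hcl : ∀ w ∈ W0, ∀ f ∈ F, w ∈ ends f → ∀ u ∈ ends f, u ∈ W0) :
    component ends F v ⊆ W0 := by
  intro y hy
  induction hy with
  | refl => exact hv
  | tail hab hbc ih =>
    rename_i b c
    obtain ⟨f, hfF, hfe⟩ := hbc
    exact hcl b ih f hfF (by rw [hfe]; simp) c (by rw [hfe]; simp)

variable [Fintype V] [Fintype E]

lemma bridge_contra {ends : E → Sym2 V} (hl : NoLoops ends) (hc : IsCubic ends)
    (hb : Bridgeless ends) (hconn : Connected ends) {W0 : Set V}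
    (hW0 : W0.Nonempty) (hcard : W0.ncard = 5) (hcross : (ecross ends W0).ncard ≤ 1) :
    False := by
  by_cases hU : W0 = Set.univ
  · have h1 := even_card_V hl hc (ends := ends)
    rw [← hU, hcard] at h1
    omega
  · have hcompl : W0ᶜ.Nonempty := Set.nonempty_compl.mpr hU
    have := two_le_cross hconn hb hW0 hcompl
    omega

/-- The configuration: a triangle `a b t` and a square `a b e d` sharing the edge `e0`. -/
structure Cfg (ends : E → Sym2 V) where
  a : V
  b : V
  t : V
  d : V
  e : V
  e0 : E
  e1 : E
  e2 : E
  g1 : E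
  g2 : E
  g3 : E
  h0 : ends e0 = s(a, b)
  h1 : ends e1 = s(b, t)
  h2 : ends e2 = s(t, a)
  hg1 : ends g1 = s(b, e)
  hg2 : ends g2 = s(e, d)
  hg3 : ends g3 = s(d, a)
  vab : a ≠ b
  vat : a ≠ t
  vbt : b ≠ t
  vae : a ≠ e
  vad : a ≠ d
  vbe : b ≠ e
  vbd : b ≠ d
  ved : e ≠ d
  e01 : e0 ≠ e1
  e02 : e0 ≠ e2
  e12 : e1 ≠ e2
  e0g1 : e0 ≠ g1
  e0g2 : e0 ≠ g2
  e0g3 : e0 ≠ g3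
  g12 : g1 ≠ g2
  g13 : g1 ≠ g3
  g23 : g2 ≠ g3

/-- Mirror symmetry of the configuration. -/
def Cfg.mirror {ends : E → Sym2 V} (C : Cfg ends) : Cfg ends where
  a := C.b
  b := C.a
  t := C.t
  d := C.e
  e := C.d
  e0 := C.e0
  e1 := C.e2
  e2 := C.e1
  g1 := C.g3
  g2 := C.g2
  g3 := C.g1
  h0 := by rw [C.h0, Sym2.eq_swap]
  h1 := by rw [C.h2, Sym2.eq_swap]
  h2 := by rw [C.h1, Sym2.eq_swap]
  hg1 := by rw [C.hg3, Sym2.eq_swap]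
  hg2 := by rw [C.hg2, Sym2.eq_swap]
  hg3 := by rw [C.hg1, Sym2.eq_swap]
  vab := C.vab.symm
  vat := C.vbt
  vbt := C.vat
  vae := C.vbd
  vad := C.vbe
  vbe := C.vad
  vbd := C.vae
  ved := C.ved.symm
  e01 := C.e02
  e02 := C.e01
  e12 := C.e12.symm
  e0g1 := C.e0g3
  e0g2 := C.e0g2
  e0g3 := C.e0g1
  g12 := C.g23.symm
  g13 := C.g13.symm
  g23 := C.g12.symm

end Mg

section SetLemmas2
variable {α : Type} [Fintype α]

lemma four_in_three {S : Set α} {w x y z : α} (hw : w ∈ S) (hx : x ∈ S) (hy : y ∈ S)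
    (hz : z ∈ S) (hwx : w ≠ x) (hwy : w ≠ y) (hwz : w ≠ z) (hxy : x ≠ y) (hxz : x ≠ z)
    (hyz : y ≠ z) (hS : S.ncard = 3) : False := by
  have hsub : ({w, x, y, z} : Set α) ⊆ S := by rintro u (rfl | rfl | rfl | rfl) <;> assumption
  have hcard : ({w, x, y, z} : Set α).ncard = 4 := by
    rw [Set.ncard_insert_of_notMem (by simp [hwx, hwy, hwz]),
      Set.ncard_insert_of_notMem (by simp [hxy, hxz]),
      Set.ncard_insert_of_notMem (by simp [hyz]), Set.ncard_singleton]
  have := Set.ncard_le_ncard hsub (Set.toFinite _)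
  omega

lemma five_eq {S : Set α} {v1 v2 v3 v4 v5 : α} (h1 : v1 ∈ S) (h2 : v2 ∈ S) (h3 : v3 ∈ S)
    (h4 : v4 ∈ S) (h5 : v5 ∈ S) (d12 : v1 ≠ v2) (d13 : v1 ≠ v3) (d14 : v1 ≠ v4)
    (d15 : v1 ≠ v5) (d23 : v2 ≠ v3) (d24 : v2 ≠ v4) (d25 : v2 ≠ v5) (d34 : v3 ≠ v4)
    (d35 : v3 ≠ v5) (d45 : v4 ≠ v5) (hS : S.ncard = 5) : S = {v1, v2, v3, v4, v5} := by
  have hsub : ({v1, v2, v3, v4, v5} : Set α) ⊆ S := by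
    rintro u (rfl | rfl | rfl | rfl | rfl) <;> assumption
  have hcard : ({v1, v2, v3, v4, v5} : Set α).ncard = 5 := by
    rw [Set.ncard_insert_of_notMem (by simp [d12, d13, d14, d15]),
      Set.ncard_insert_of_notMem (by simp [d23, d24, d25]),
      Set.ncard_insert_of_notMem (by simp [d34, d35]),
      Set.ncard_insert_of_notMem (by simp [d45]), Set.ncard_singleton]
  exact (Set.eq_of_subset_of_ncard_le hsub (by omega) (Set.toFinite _)).symm

end SetLemmas2

namespace Mg
variable {V E : Type}

lemma ends_subset {ends : E → Sym2 V} {f : E} {p q : V} {W0 : Set V}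
    (he : ends f = s(p, q)) (hp : p ∈ W0) (hq : q ∈ W0) : ∀ u ∈ ends f, u ∈ W0 := by
  intro u hu
  rw [he, Sym2.mem_iff] at hu
  rcases hu with rfl | rfl <;> assumption

lemma sym2_ne_of_ends {x y u v : V} (h : s(x, y) = s(u, v))
    (h1 : x ≠ u ∨ y ≠ v) (h2 : x ≠ v ∨ y ≠ u) : False := by
  rw [Sym2.eq_iff] at h
  rcases h with ⟨rfl, rfl⟩ | ⟨rfl, rfl⟩
  · rcases h1 with h | h <;> exact h rfl
  · rcases h2 with h | h <;> exact h rfl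

variable [Fintype V] [Fintype E]

/-- The generic case : `t ∉ {d, e}`. -/
lemma generic_contra {ends : E → Sym2 V} (hl : NoLoops ends) (hc : IsCubic ends)
    (hb : Bridgeless ends) (hconn : Connected ends) (h5 : TwoFactorsAllC5 ends)
    (C : Cfg ends) (htd : C.t ≠ C.d) (hte : C.t ≠ C.e) : False := by
  obtain ⟨a, b, t, d, e, e0, e1, e2, g1, g2, g3, h0, h1, h2, hg1, hg2, hg3, vab, vat, vbt,
    vae, vad, vbe, vbd, ved, e01, e02, e12, e0g1, e0g2, e0g3, g12, g13, g23⟩ := C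
  simp only at htd hte
  -- edge-distinctness via endpoints
  have he2g3 : e2 ≠ g3 := by
    intro h
    have h2' := h2
    rw [h, hg3] at h2'
    rcases Sym2.eq_iff.mp h2'.symm with ⟨h', -⟩ | ⟨-, h'⟩
    · exact htd h'
    · exact vad h'
  have he1g1 : e1 ≠ g1 := by
    intro h
    have h1' := h1
    rw [h, hg1] at h1'
    rcases Sym2.eq_iff.mp h1'.symm with ⟨-, h'⟩ | ⟨h', -⟩
    · exact hte h'
    · exact vbe h'
  have he1g2 : e1 ≠ g2 := by
    intro h
    have h1' := h1
    rw [h, hg2] at h1'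
    rcases Sym2.eq_iff.mp h1' with ⟨h', -⟩ | ⟨h', -⟩
    · exact vbe h'.symm
    · exact hte h'.symm
  have he1g3 : e1 ≠ g3 := by
    intro h
    have h1' := h1
    rw [h, hg3] at h1'
    rcases Sym2.eq_iff.mp h1' with ⟨h', -⟩ | ⟨h', -⟩
    · exact vbd h'.symm
    · exact htd h'.symm
  have he2g2 : e2 ≠ g2 := by
    intro h
    have h2' := h2
    rw [h, hg2] at h2'
    rcases Sym2.eq_iff.mp h2' with ⟨h', -⟩ | ⟨h', -⟩
    · exact hte h'.symm
    · exact vae h'.symm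
  -- incidence sets
  have hIa : {f | a ∈ ends f} = {e0, e2, g3} :=
    three_eq (by rw [Set.mem_setOf_eq, h0]; simp) (by rw [Set.mem_setOf_eq, h2]; simp)
      (by rw [Set.mem_setOf_eq, hg3]; simp) e02 e0g3 he2g3 (hc a)
  have hIb : {f | b ∈ ends f} = {e0, e1, g1} :=
    three_eq (by rw [Set.mem_setOf_eq, h0]; simp) (by rw [Set.mem_setOf_eq, h1]; simp)
      (by rw [Set.mem_setOf_eq, hg1]; simp) e01 e0g1 he1g1 (hc b)
  obtain ⟨t3, ht31, ht32, hIt⟩ := third_elem (S := {f | t ∈ ends f})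
    (by rw [Set.mem_setOf_eq, h1]; simp) (by rw [Set.mem_setOf_eq, h2]; simp) e12 (hc t)
  obtain ⟨d3, hd32, hd33, hId⟩ := third_elem (S := {f | d ∈ ends f})
    (by rw [Set.mem_setOf_eq, hg2]; simp) (by rw [Set.mem_setOf_eq, hg3]; simp) g23 (hc d)
  obtain ⟨ee3, hee31, hee32, hIe⟩ := third_elem (S := {f | e ∈ ends f})
    (by rw [Set.mem_setOf_eq, hg1]; simp) (by rw [Set.mem_setOf_eq, hg2]; simp) g12 (hc e)
  have ht3t : t ∈ ends t3 := by
    have hmm : t3 ∈ {f | t ∈ ends f} := by rw [hIt]; simp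
    exact hmm
  -- the two-factor
  obtain ⟨F, hTF, he2F, hMprop⟩ := exists_twofactor hl hc hb hconn vat h2
  have hin : ∀ f, (a ∈ ends f ∨ t ∈ ends f) → f ≠ e2 → f ∈ F := by
    intro f hf hne
    by_contra hfF
    rcases hMprop f hfF with rfl | ⟨hna, hnt⟩
    · exact hne rfl
    · rcases hf with h | h
      · exact hna h
      · exact hnt h
  have he0F : e0 ∈ F := hin e0 (Or.inl (by rw [h0]; simp)) e02
  have hg3F : g3 ∈ F := hin g3 (Or.inl (by rw [hg3]; simp)) (Ne.symm he2g3)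
  have he1F : e1 ∈ F := hin e1 (Or.inr (by rw [h1]; simp)) e12
  have ht3F : t3 ∈ F := hin t3 (Or.inr ht3t) ht32
  have hg1F : g1 ∉ F := by
    intro hg1F
    exact three_in_two (S := {f | f ∈ F ∧ b ∈ ends f})
      ⟨he0F, by rw [h0]; simp⟩ ⟨he1F, by rw [h1]; simp⟩ ⟨hg1F, by rw [hg1]; simp⟩
      e01 e0g1 he1g1 (hTF b)
  have hFe : {f | f ∈ F ∧ e ∈ ends f} = {g2, ee3} := by
    have hsub : {f | f ∈ F ∧ e ∈ ends f} ⊆ {g2, ee3} := by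
      rintro f ⟨hfF, hfe⟩
      have hmm : f ∈ {f | e ∈ ends f} := hfe
      rw [hIe] at hmm
      simp only [Set.mem_insert_iff, Set.mem_singleton_iff] at hmm
      rcases hmm with h | h | h
      · exact absurd (h ▸ hfF) hg1F
      · exact Or.inl h
      · exact Or.inr h
    have hcard : ({g2, ee3} : Set E).ncard = 2 := Set.ncard_pair (Ne.symm hee32)
    exact Set.eq_of_subset_of_ncard_le hsub (by rw [hcard, hTF e]) (Set.toFinite _)
  have hg2F : g2 ∈ F := by
    have hmm : g2 ∈ {f | f ∈ F ∧ e ∈ ends f} := by rw [hFe]; simp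
    exact hmm.1
  have hee3F : ee3 ∈ F := by
    have hmm : ee3 ∈ {f | f ∈ F ∧ e ∈ ends f} := by rw [hFe]; simp
    exact hmm.1
  have hFd : {f | f ∈ F ∧ d ∈ ends f} = {g2, g3} :=
    two_eq ⟨hg2F, by rw [hg2]; simp⟩ ⟨hg3F, by rw [hg3]; simp⟩ g23 (hTF d)
  -- other end of t3
  obtain ⟨w, hw⟩ := mem_ends_orient ht3t
  have hwt : w ≠ t := by
    intro h
    apply hl t3
    rw [hw, h]
    exact Sym2.mk_isDiag_iff.mpr rfl
  -- the component of a
  have hWcard : (component ends F a).ncard = 5 := h5 F hTF a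
  have haW : a ∈ component ends F a := mem_component_self ends F a
  have hbW : b ∈ component ends F a := comp_step haW he0F h0
  have htW : t ∈ component ends F a := comp_step hbW he1F h1
  have hdW : d ∈ component ends F a := comp_step haW hg3F (by rw [hg3, Sym2.eq_swap])
  have heW : e ∈ component ends F a := comp_step hdW hg2F (by rw [hg2, Sym2.eq_swap])
  have hwW : w ∈ component ends F a := comp_step htW ht3F hw
  have hWeq : component ends F a = {a, b, t, d, e} :=
    five_eq haW hbW htW hdW heW vab vat vad vae vbt vbd vbe htd hte (Ne.symm ved) hWcard
  have hwa : a ∉ ends t3 := by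
    intro hat3
    have hmm : t3 ∈ {f | a ∈ ends f} := hat3
    rw [hIa] at hmm
    simp only [Set.mem_insert_iff, Set.mem_singleton_iff] at hmm
    rcases hmm with h | h | h
    · rw [h, h0, Sym2.mem_iff] at ht3t
      rcases ht3t with h' | h'
      · exact vat h'.symm
      · exact vbt h'.symm
    · exact ht32 h
    · rw [h, hg3, Sym2.mem_iff] at ht3t
      rcases ht3t with h' | h'
      · exact htd h'
      · exact vat h'.symm
  have hwe : w = e := by
    have hwmem : w ∈ ({a, b, t, d, e} : Set V) := hWeq ▸ hwW
    simp only [Set.mem_insert_iff, Set.mem_singleton_iff] at hwmem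
    rcases hwmem with hq | hq | hq | hq | hq
    · exact absurd (by rw [hw, hq]; simp : a ∈ ends t3) hwa
    · exfalso
      have hmm : t3 ∈ {f | b ∈ ends f} := by
        rw [Set.mem_setOf_eq, hw, hq]; simp
      rw [hIb] at hmm
      simp only [Set.mem_insert_iff, Set.mem_singleton_iff] at hmm
      rcases hmm with h | h | h
      · rw [h, h0, Sym2.mem_iff] at ht3t
        rcases ht3t with h' | h'
        · exact vat h'.symm
        · exact vbt h'.symm
      · exact ht31 h
      · rw [h, hg1, Sym2.mem_iff] at ht3t
        rcases ht3t with h' | h'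
        · exact vbt h'.symm
        · exact hte h'
    · exact absurd hq hwt
    · exfalso
      have hmm : t3 ∈ {f | f ∈ F ∧ d ∈ ends f} := ⟨ht3F, by rw [hw, hq]; simp⟩
      rw [hFd] at hmm
      simp only [Set.mem_insert_iff, Set.mem_singleton_iff] at hmm
      rcases hmm with h | h
      · rw [h, hg2, Sym2.mem_iff] at ht3t
        rcases ht3t with h' | h'
        · exact hte h'
        · exact htd h'
      · rw [h, hg3, Sym2.mem_iff] at ht3t
        rcases ht3t with h' | h'
        · exact htd h'
        · exact vat h'.symm
    · exact hq
  have ht3ee3 : t3 = ee3 := by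
    have hmm : t3 ∈ {f | e ∈ ends f} := by
      rw [Set.mem_setOf_eq, hw, hwe]; simp
    rw [hIe] at hmm
    simp only [Set.mem_insert_iff, Set.mem_singleton_iff] at hmm
    rcases hmm with h | h | h
    · exfalso
      rw [h, hg1, Sym2.mem_iff] at ht3t
      rcases ht3t with h' | h'
      · exact vbt h'.symm
      · exact hte h'
    · exfalso
      rw [h, hg2, Sym2.mem_iff] at ht3t
      rcases ht3t with h' | h'
      · exact hte h'
      · exact htd h'
    · exact h
  -- boundary analysis
  have hamem : a ∈ ({a, b, t, d, e} : Set V) := by simp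
  have hbmem : b ∈ ({a, b, t, d, e} : Set V) := by simp
  have htmem : t ∈ ({a, b, t, d, e} : Set V) := by simp
  have hdmem : d ∈ ({a, b, t, d, e} : Set V) := by simp
  have hemem : e ∈ ({a, b, t, d, e} : Set V) := by simp
  have hcross : ecross ends ({a, b, t, d, e} : Set V) ⊆ {d3} := by
    rintro f ⟨u, w', hf, hu, hw'⟩
    have hinc : u ∈ ends f := by rw [hf]; simp
    simp only [Set.mem_insert_iff, Set.mem_singleton_iff] at hu
    have hwin : w' ∈ ends f := by rw [hf]; simp
    rcases hu with hq | hq | hq | hq | hq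
    · exfalso
      rw [hq] at hinc
      have hmm : f ∈ {f | a ∈ ends f} := hinc
      rw [hIa] at hmm
      simp only [Set.mem_insert_iff, Set.mem_singleton_iff] at hmm
      rcases hmm with h | h | h
      · exact hw' (ends_subset (by rw [h]; exact h0) hamem hbmem w' hwin)
      · exact hw' (ends_subset (by rw [h]; exact h2) htmem hamem w' hwin)
      · exact hw' (ends_subset (by rw [h]; exact hg3) hdmem hamem w' hwin)
    · exfalso
      rw [hq] at hinc
      have hmm : f ∈ {f | b ∈ ends f} := hinc
      rw [hIb] at hmm
      simp only [Set.mem_insert_iff, Set.mem_singleton_iff] at hmm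
      rcases hmm with h | h | h
      · exact hw' (ends_subset (by rw [h]; exact h0) hamem hbmem w' hwin)
      · exact hw' (ends_subset (by rw [h]; exact h1) hbmem htmem w' hwin)
      · exact hw' (ends_subset (by rw [h]; exact hg1) hbmem hemem w' hwin)
    · exfalso
      rw [hq] at hinc
      have hmm : f ∈ {f | t ∈ ends f} := hinc
      rw [hIt] at hmm
      simp only [Set.mem_insert_iff, Set.mem_singleton_iff] at hmm
      rcases hmm with h | h | h
      · exact hw' (ends_subset (by rw [h]; exact h1) hbmem htmem w' hwin)
      · exact hw' (ends_subset (by rw [h]; exact h2) htmem hamem w' hwin)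
      · refine hw' (ends_subset (p := t) (q := e) (by rw [h, hw, hwe]) htmem hemem w' hwin)
    · rw [hq] at hinc
      have hmm : f ∈ {f | d ∈ ends f} := hinc
      rw [hId] at hmm
      simp only [Set.mem_insert_iff, Set.mem_singleton_iff] at hmm
      rcases hmm with h | h | h
      · exact absurd (ends_subset (by rw [h]; exact hg2) hemem hdmem w' hwin) hw'
      · exact absurd (ends_subset (by rw [h]; exact hg3) hdmem hamem w' hwin) hw'
      · exact Set.mem_singleton_iff.mpr h
    · exfalso
      rw [hq] at hinc
      have hmm : f ∈ {f | e ∈ ends f} := hinc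
      rw [hIe] at hmm
      simp only [Set.mem_insert_iff, Set.mem_singleton_iff] at hmm
      rcases hmm with h | h | h
      · exact hw' (ends_subset (by rw [h]; exact hg1) hbmem hemem w' hwin)
      · exact hw' (ends_subset (by rw [h]; exact hg2) hemem hdmem w' hwin)
      · refine hw' (ends_subset (p := t) (q := e) (by rw [h, ← ht3ee3, hw, hwe]) htmem hemem w' hwin)
  have hcrosscard : (ecross ends ({a, b, t, d, e} : Set V)).ncard ≤ 1 := by
    have hmm := Set.ncard_le_ncard hcross (Set.toFinite _)
    rwa [Set.ncard_singleton] at hmm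
  exact bridge_contra hl hc hb hconn ⟨a, hamem⟩ (hWeq ▸ hWcard) hcrosscard


lemma ncard_quad_le {α : Type} [Fintype α] (v1 v2 v3 v4 : α) :
    ({v1, v2, v3, v4} : Set α).ncard ≤ 4 := by
  calc ({v1, v2, v3, v4} : Set α).ncard ≤ ({v2, v3, v4} : Set α).ncard + 1 :=
        Set.ncard_insert_le _ _
    _ ≤ (({v3, v4} : Set α).ncard + 1) + 1 := by
        have := Set.ncard_insert_le v2 ({v3, v4} : Set α)
        omega
    _ ≤ ((({v4} : Set α).ncard + 1) + 1) + 1 := by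
        have := Set.ncard_insert_le v3 ({v4} : Set α)
        omega
    _ ≤ 4 := by rw [Set.ncard_singleton]

/-- Degenerate case : `t = d` but the triangle edge `ta` differs from the square edge `da`:
then `t` has four distinct incident edges, contradiction. -/
lemma deg2_contra {ends : E → Sym2 V} (hc : IsCubic ends)
    (C : Cfg ends) (htd : C.t = C.d) (hne : C.e2 ≠ C.g3) : False := by
  obtain ⟨a, b, t, d, e, e0, e1, e2, g1, g2, g3, h0, h1, h2, hg1, hg2, hg3, vab, vat, vbt,
    vae, vad, vbe, vbd, ved, e01, e02, e12, e0g1, e0g2, e0g3, g12, g13, g23⟩ := C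
  simp only at htd hne
  have he1g2 : e1 ≠ g2 := by
    intro h
    have h1' := h1
    rw [h, hg2] at h1'
    rcases Sym2.eq_iff.mp h1' with ⟨h', -⟩ | ⟨-, h'⟩
    · exact vbe h'.symm
    · exact vbd h'.symm
  have he1g3 : e1 ≠ g3 := by
    intro h
    have h1' := h1
    rw [h, hg3] at h1'
    rcases Sym2.eq_iff.mp h1' with ⟨h', -⟩ | ⟨-, h'⟩
    · exact vbd h'.symm
    · exact vab h'
  have he2g2 : e2 ≠ g2 := by
    intro h
    have h2' := h2
    rw [h, hg2] at h2'
    rcases Sym2.eq_iff.mp h2' with ⟨-, h'⟩ | ⟨h', -⟩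
    · exact vad h'.symm
    · exact vae h'.symm
  exact four_in_three (S := {f | t ∈ ends f})
    (by rw [Set.mem_setOf_eq, h1]; simp) (by rw [Set.mem_setOf_eq, h2]; simp)
    (by rw [Set.mem_setOf_eq, hg2, Sym2.mem_iff]; exact Or.inr htd)
    (by rw [Set.mem_setOf_eq, hg3, Sym2.mem_iff]; exact Or.inl htd)
    e12 he1g2 he1g3 he2g2 hne g23 (hc t)

/-- Degenerate case : `t = d` and the triangle and square share both edges `ab` and `ta`. -/
lemma deg1_contra {ends : E → Sym2 V} (hl : NoLoops ends) (hc : IsCubic ends)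
    (hb : Bridgeless ends) (hconn : Connected ends) (h5 : TwoFactorsAllC5 ends)
    (C : Cfg ends) (htd : C.t = C.d) (heq : C.e2 = C.g3) : False := by
  obtain ⟨a, b, t, d, e, e0, e1, e2, g1, g2, g3, h0, h1, h2, hg1, hg2, hg3, vab, vat, vbt,
    vae, vad, vbe, vbd, ved, e01, e02, e12, e0g1, e0g2, e0g3, g12, g13, g23⟩ := C
  simp only at htd heq
  have hg2' : ends g2 = s(e, t) := by rw [hg2, ← htd]
  have hte : t ≠ e := by
    intro h
    exact ved (by rw [← h]; exact htd)
  -- edge distinctness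
  have he1g1 : e1 ≠ g1 := by
    intro h
    have h1' := h1
    rw [h, hg1] at h1'
    rcases Sym2.eq_iff.mp h1' with ⟨-, h'⟩ | ⟨h', -⟩
    · exact hte h'.symm
    · exact vbt h'
  have he1g2 : e1 ≠ g2 := by
    intro h
    have h1' := h1
    rw [h, hg2'] at h1'
    rcases Sym2.eq_iff.mp h1' with ⟨h', -⟩ | ⟨-, h'⟩
    · exact vbe h'.symm
    · exact vbt h'.symm
  have he2g2 : e2 ≠ g2 := by
    intro h
    have h2' := h2
    rw [h, hg2'] at h2'
    rcases Sym2.eq_iff.mp h2' with ⟨h', -⟩ | ⟨h', -⟩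
    · exact hte h'.symm
    · exact vae h'.symm
  -- incidence sets
  have hIb : {f | b ∈ ends f} = {e0, e1, g1} :=
    three_eq (by rw [Set.mem_setOf_eq, h0]; simp) (by rw [Set.mem_setOf_eq, h1]; simp)
      (by rw [Set.mem_setOf_eq, hg1]; simp) e01 e0g1 he1g1 (hc b)
  have hIt : {f | t ∈ ends f} = {e1, e2, g2} :=
    three_eq (by rw [Set.mem_setOf_eq, h1]; simp) (by rw [Set.mem_setOf_eq, h2]; simp)
      (by rw [Set.mem_setOf_eq, hg2']; simp) e12 he1g2 he2g2 (hc t)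
  obtain ⟨x, hx0, hx2, hIa⟩ := third_elem (S := {f | a ∈ ends f})
    (by rw [Set.mem_setOf_eq, h0]; simp) (by rw [Set.mem_setOf_eq, h2]; simp) e02 (hc a)
  obtain ⟨y, hy1, hy2, hIe⟩ := third_elem (S := {f | e ∈ ends f})
    (by rw [Set.mem_setOf_eq, hg1]; simp) (by rw [Set.mem_setOf_eq, hg2']; simp) g12 (hc e)
  have hax : a ∈ ends x := by
    have hmm : x ∈ {f | a ∈ ends f} := by rw [hIa]; simp
    exact hmm
  have hey : e ∈ ends y := by
    have hmm : y ∈ {f | e ∈ ends f} := by rw [hIe]; simp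
    exact hmm
  -- the two-factor
  obtain ⟨F, hTF, he2F, hMprop⟩ := exists_twofactor hl hc hb hconn vat h2
  have hin : ∀ f, (a ∈ ends f ∨ t ∈ ends f) → f ≠ e2 → f ∈ F := by
    intro f hf hne
    by_contra hfF
    rcases hMprop f hfF with rfl | ⟨hna, hnt⟩
    · exact hne rfl
    · rcases hf with h | h
      · exact hna h
      · exact hnt h
  have he0F : e0 ∈ F := hin e0 (Or.inl (by rw [h0]; simp)) e02
  have he1F : e1 ∈ F := hin e1 (Or.inr (by rw [h1]; simp)) e12
  have hg2F : g2 ∈ F := hin g2 (Or.inr (by rw [hg2']; simp)) (Ne.symm he2g2)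
  have hxF : x ∈ F := hin x (Or.inl hax) hx2
  have hg1F : g1 ∉ F := by
    intro hg1F
    exact three_in_two (S := {f | f ∈ F ∧ b ∈ ends f})
      ⟨he0F, by rw [h0]; simp⟩ ⟨he1F, by rw [h1]; simp⟩ ⟨hg1F, by rw [hg1]; simp⟩
      e01 e0g1 he1g1 (hTF b)
  have hFe : {f | f ∈ F ∧ e ∈ ends f} = {g2, y} := by
    have hsub : {f | f ∈ F ∧ e ∈ ends f} ⊆ {g2, y} := by
      rintro f ⟨hfF, hfe⟩
      have hmm : f ∈ {f | e ∈ ends f} := hfe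
      rw [hIe] at hmm
      simp only [Set.mem_insert_iff, Set.mem_singleton_iff] at hmm
      rcases hmm with h | h | h
      · exact absurd (h ▸ hfF) hg1F
      · exact Or.inl h
      · exact Or.inr h
    have hcard : ({g2, y} : Set E).ncard = 2 := Set.ncard_pair (Ne.symm hy2)
    exact Set.eq_of_subset_of_ncard_le hsub (by rw [hcard, hTF e]) (Set.toFinite _)
  have hyF : y ∈ F := by
    have hmm : y ∈ {f | f ∈ F ∧ e ∈ ends f} := by rw [hFe]; simp
    exact hmm.1
  have hFa : {f | f ∈ F ∧ a ∈ ends f} = {e0, x} :=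
    two_eq ⟨he0F, by rw [h0]; simp⟩ ⟨hxF, hax⟩ (Ne.symm hx0) (hTF a)
  have hFb : {f | f ∈ F ∧ b ∈ ends f} = {e0, e1} :=
    two_eq ⟨he0F, by rw [h0]; simp⟩ ⟨he1F, by rw [h1]; simp⟩ e01 (hTF b)
  have hFt : {f | f ∈ F ∧ t ∈ ends f} = {e1, g2} :=
    two_eq ⟨he1F, by rw [h1]; simp⟩ ⟨hg2F, by rw [hg2']; simp⟩ he1g2 (hTF t)
  -- orientations
  obtain ⟨x2, hxe⟩ := mem_ends_orient hax
  obtain ⟨y2, hye⟩ := mem_ends_orient hey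
  -- components
  have hWcard : (component ends F a).ncard = 5 := h5 F hTF a
  have haW : a ∈ component ends F a := mem_component_self ends F a
  have hbW : b ∈ component ends F a := comp_step haW he0F h0
  have htW : t ∈ component ends F a := comp_step hbW he1F h1
  have heW : e ∈ component ends F a := comp_step htW hg2F (by rw [hg2', Sym2.eq_swap])
  have hx2W : x2 ∈ component ends F a := comp_step haW hxF hxe
  have hy2W : y2 ∈ component ends F a := comp_step heW hyF hye
  by_cases hxy : x = y
  · -- the third edges at a and e coincide : component has only 4 vertices
    have hx2e : x2 = e ∧ y2 = a := by
      have h' : s(a, x2) = s(e, y2) := by rw [← hxe, hxy, hye]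
      rcases Sym2.eq_iff.mp h' with ⟨h1', -⟩ | ⟨h1', h2'⟩
      · exact absurd h1' vae
      · exact ⟨h2', h1'.symm⟩
    have hxe' : ends x = s(a, e) := by rw [hxe, hx2e.1]
    have hamem : a ∈ ({a, b, t, e} : Set V) := by simp
    have hbmem : b ∈ ({a, b, t, e} : Set V) := by simp
    have htmem : t ∈ ({a, b, t, e} : Set V) := by simp
    have hemem : e ∈ ({a, b, t, e} : Set V) := by simp
    have hsub : component ends F a ⊆ ({a, b, t, e} : Set V) := by
      apply component_subset hamem
      intro w hwmem f hfF hwf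
      simp only [Set.mem_insert_iff, Set.mem_singleton_iff] at hwmem
      rcases hwmem with hq | hq | hq | hq
      · have hmm : f ∈ {f | f ∈ F ∧ a ∈ ends f} := ⟨hfF, hq ▸ hwf⟩
        rw [hFa] at hmm
        simp only [Set.mem_insert_iff, Set.mem_singleton_iff] at hmm
        rcases hmm with h | h
        · exact ends_subset (by rw [h]; exact h0) hamem hbmem
        · exact ends_subset (by rw [h]; exact hxe') hamem hemem
      · have hmm : f ∈ {f | f ∈ F ∧ b ∈ ends f} := ⟨hfF, hq ▸ hwf⟩
        rw [hFb] at hmm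
        simp only [Set.mem_insert_iff, Set.mem_singleton_iff] at hmm
        rcases hmm with h | h
        · exact ends_subset (by rw [h]; exact h0) hamem hbmem
        · exact ends_subset (by rw [h]; exact h1) hbmem htmem
      · have hmm : f ∈ {f | f ∈ F ∧ t ∈ ends f} := ⟨hfF, hq ▸ hwf⟩
        rw [hFt] at hmm
        simp only [Set.mem_insert_iff, Set.mem_singleton_iff] at hmm
        rcases hmm with h | h
        · exact ends_subset (by rw [h]; exact h1) hbmem htmem
        · exact ends_subset (by rw [h]; exact hg2') hemem htmem
      · have hmm : f ∈ {f | f ∈ F ∧ e ∈ ends f} := ⟨hfF, hq ▸ hwf⟩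
        rw [hFe] at hmm
        simp only [Set.mem_insert_iff, Set.mem_singleton_iff] at hmm
        rcases hmm with h | h
        · exact ends_subset (by rw [h]; exact hg2') hemem htmem
        · exact ends_subset (by rw [h, ← hxy]; exact hxe') hamem hemem
    have hle := Set.ncard_le_ncard hsub (Set.toFinite _)
    have h4 := ncard_quad_le a b t e
    omega
  · -- x ≠ y : component is a,b,t,e,x2 and a single boundary edge remains
    have hx2a : x2 ≠ a := by
      intro h
      apply hl x
      rw [hxe, h]
      exact Sym2.mk_isDiag_iff.mpr rfl
    have hy2e : y2 ≠ e := by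
      intro h
      apply hl y
      rw [hye, h]
      exact Sym2.mk_isDiag_iff.mpr rfl
    have hx2b : x2 ≠ b := by
      intro hq
      have hmm : x ∈ {f | b ∈ ends f} := by
        rw [Set.mem_setOf_eq, hxe, hq, Sym2.mem_iff]; exact Or.inr rfl
      rw [hIb] at hmm
      simp only [Set.mem_insert_iff, Set.mem_singleton_iff] at hmm
      rcases hmm with h | h | h
      · exact hx0 h
      · rw [h, h1, Sym2.mem_iff] at hax
        rcases hax with h' | h'
        · exact vab h'
        · exact vat h'
      · rw [h, hg1, Sym2.mem_iff] at hax
        rcases hax with h' | h'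
        · exact vab h'
        · exact vae h'
    have hx2t : x2 ≠ t := by
      intro hq
      have hmm : x ∈ {f | t ∈ ends f} := by
        rw [Set.mem_setOf_eq, hxe, hq, Sym2.mem_iff]; exact Or.inr rfl
      rw [hIt] at hmm
      simp only [Set.mem_insert_iff, Set.mem_singleton_iff] at hmm
      rcases hmm with h | h | h
      · rw [h, h1, Sym2.mem_iff] at hax
        rcases hax with h' | h'
        · exact vab h'
        · exact vat h'
      · exact hx2 h
      · rw [h, hg2', Sym2.mem_iff] at hax
        rcases hax with h' | h'
        · exact vae h'
        · exact vat h'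
    have hx2e : x2 ≠ e := by
      intro hq
      have hmm : x ∈ {f | e ∈ ends f} := by
        rw [Set.mem_setOf_eq, hxe, hq, Sym2.mem_iff]; exact Or.inr rfl
      rw [hIe] at hmm
      simp only [Set.mem_insert_iff, Set.mem_singleton_iff] at hmm
      rcases hmm with h | h | h
      · rw [h, hg1, Sym2.mem_iff] at hax
        rcases hax with h' | h'
        · exact vab h'
        · exact vae h'
      · rw [h, hg2', Sym2.mem_iff] at hax
        rcases hax with h' | h'
        · exact vae h'
        · exact vat h'
      · exact hxy h
    have hWeq : component ends F a = {a, b, t, e, x2} :=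
      five_eq haW hbW htW heW hx2W vab vat vae (Ne.symm hx2a) vbt vbe (Ne.symm hx2b)
        hte (Ne.symm hx2t) (Ne.symm hx2e) hWcard
    -- identify y2 = x2
    have hy2x2 : y2 = x2 := by
      have hymem : y2 ∈ ({a, b, t, e, x2} : Set V) := hWeq ▸ hy2W
      simp only [Set.mem_insert_iff, Set.mem_singleton_iff] at hymem
      rcases hymem with hq | hq | hq | hq | hq
      · exfalso
        have hmm : y ∈ {f | a ∈ ends f} := by
          rw [Set.mem_setOf_eq, hye, hq, Sym2.mem_iff]; exact Or.inr rfl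
        rw [hIa] at hmm
        simp only [Set.mem_insert_iff, Set.mem_singleton_iff] at hmm
        rcases hmm with h | h | h
        · rw [h, h0, Sym2.mem_iff] at hey
          rcases hey with h' | h'
          · exact vae h'.symm
          · exact vbe h'.symm
        · rw [h, h2, Sym2.mem_iff] at hey
          rcases hey with h' | h'
          · exact hte h'.symm
          · exact vae h'.symm
        · exact hxy h.symm
      · exfalso
        have hmm : y ∈ {f | b ∈ ends f} := by
          rw [Set.mem_setOf_eq, hye, hq, Sym2.mem_iff]; exact Or.inr rfl
        rw [hIb] at hmm
        simp only [Set.mem_insert_iff, Set.mem_singleton_iff] at hmm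
        rcases hmm with h | h | h
        · rw [h, h0, Sym2.mem_iff] at hey
          rcases hey with h' | h'
          · exact vae h'.symm
          · exact vbe h'.symm
        · rw [h, h1, Sym2.mem_iff] at hey
          rcases hey with h' | h'
          · exact vbe h'.symm
          · exact hte h'.symm
        · exact hy1 h
      · exfalso
        have hmm : y ∈ {f | t ∈ ends f} := by
          rw [Set.mem_setOf_eq, hye, hq, Sym2.mem_iff]; exact Or.inr rfl
        rw [hIt] at hmm
        simp only [Set.mem_insert_iff, Set.mem_singleton_iff] at hmm
        rcases hmm with h | h | h
        · rw [h, h1, Sym2.mem_iff] at hey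
          rcases hey with h' | h'
          · exact vbe h'.symm
          · exact hte h'.symm
        · rw [h, h2, Sym2.mem_iff] at hey
          rcases hey with h' | h'
          · exact hte h'.symm
          · exact vae h'.symm
        · exact hy2 h
      · exact absurd hq hy2e
      · exact hq
    -- the third edge at x2
    have hx2x : x2 ∈ ends x := by rw [hxe, Sym2.mem_iff]; exact Or.inr rfl
    have hx2y : x2 ∈ ends y := by rw [hye, hy2x2, Sym2.mem_iff]; exact Or.inr rfl
    obtain ⟨x3, hx3x, hx3y, hIx2⟩ := third_elem (S := {f | x2 ∈ ends f}) hx2x hx2y hxy (hc x2)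
    -- boundary
    have hamem : a ∈ ({a, b, t, e, x2} : Set V) := by simp
    have hbmem : b ∈ ({a, b, t, e, x2} : Set V) := by simp
    have htmem : t ∈ ({a, b, t, e, x2} : Set V) := by simp
    have hemem : e ∈ ({a, b, t, e, x2} : Set V) := by simp
    have hx2mem : x2 ∈ ({a, b, t, e, x2} : Set V) := by simp
    have hcross : ecross ends ({a, b, t, e, x2} : Set V) ⊆ {x3} := by
      rintro f ⟨u, w', hf, hu, hw'⟩
      have hinc : u ∈ ends f := by rw [hf]; simp
      have hwin : w' ∈ ends f := by rw [hf]; simp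
      simp only [Set.mem_insert_iff, Set.mem_singleton_iff] at hu
      rcases hu with hq | hq | hq | hq | hq
      · exfalso
        rw [hq] at hinc
        have hmm : f ∈ {f | a ∈ ends f} := hinc
        rw [hIa] at hmm
        simp only [Set.mem_insert_iff, Set.mem_singleton_iff] at hmm
        rcases hmm with h | h | h
        · exact hw' (ends_subset (by rw [h]; exact h0) hamem hbmem w' hwin)
        · exact hw' (ends_subset (by rw [h]; exact h2) htmem hamem w' hwin)
        · exact hw' (ends_subset (by rw [h]; exact hxe) hamem hx2mem w' hwin)
      · exfalso
        rw [hq] at hinc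
        have hmm : f ∈ {f | b ∈ ends f} := hinc
        rw [hIb] at hmm
        simp only [Set.mem_insert_iff, Set.mem_singleton_iff] at hmm
        rcases hmm with h | h | h
        · exact hw' (ends_subset (by rw [h]; exact h0) hamem hbmem w' hwin)
        · exact hw' (ends_subset (by rw [h]; exact h1) hbmem htmem w' hwin)
        · exact hw' (ends_subset (by rw [h]; exact hg1) hbmem hemem w' hwin)
      · exfalso
        rw [hq] at hinc
        have hmm : f ∈ {f | t ∈ ends f} := hinc
        rw [hIt] at hmm
        simp only [Set.mem_insert_iff, Set.mem_singleton_iff] at hmm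
        rcases hmm with h | h | h
        · exact hw' (ends_subset (by rw [h]; exact h1) hbmem htmem w' hwin)
        · exact hw' (ends_subset (by rw [h]; exact h2) htmem hamem w' hwin)
        · exact hw' (ends_subset (by rw [h]; exact hg2') hemem htmem w' hwin)
      · exfalso
        rw [hq] at hinc
        have hmm : f ∈ {f | e ∈ ends f} := hinc
        rw [hIe] at hmm
        simp only [Set.mem_insert_iff, Set.mem_singleton_iff] at hmm
        rcases hmm with h | h | h
        · exact hw' (ends_subset (by rw [h]; exact hg1) hbmem hemem w' hwin)
        · exact hw' (ends_subset (by rw [h]; exact hg2') hemem htmem w' hwin)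
        · refine hw' (ends_subset (p := e) (q := x2) (by rw [h, hye, hy2x2]) hemem hx2mem w' hwin)
      · rw [hq] at hinc
        have hmm : f ∈ {f | x2 ∈ ends f} := hinc
        rw [hIx2] at hmm
        simp only [Set.mem_insert_iff, Set.mem_singleton_iff] at hmm
        rcases hmm with h | h | h
        · exact absurd (ends_subset (by rw [h]; exact hxe) hamem hx2mem w' hwin) hw'
        · exact absurd (ends_subset (p := e) (q := x2) (by rw [h, hye, hy2x2]) hemem hx2mem
            w' hwin) hw'
        · exact Set.mem_singleton_iff.mpr h
    have hcrosscard : (ecross ends ({a, b, t, e, x2} : Set V)).ncard ≤ 1 := by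
      have hmm := Set.ncard_le_ncard hcross (Set.toFinite _)
      rwa [Set.ncard_singleton] at hmm
    exact bridge_contra hl hc hb hconn ⟨a, hamem⟩ (hWeq ▸ hWcard) hcrosscard

/-- Any configuration leads to a contradiction. -/
lemma cfg_contra {ends : E → Sym2 V} (hl : NoLoops ends) (hc : IsCubic ends)
    (hb : Bridgeless ends) (hconn : Connected ends) (h5 : TwoFactorsAllC5 ends)
    (C : Cfg ends) : False := by
  by_cases htd : C.t = C.d
  · by_cases heq : C.e2 = C.g3
    · exact deg1_contra hl hc hb hconn h5 C htd heq
    · exact deg2_contra hc C htd heq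
  · by_cases hte : C.t = C.e
    · by_cases heq : C.mirror.e2 = C.mirror.g3
      · exact deg1_contra hl hc hb hconn h5 C.mirror hte heq
      · exact deg2_contra hc C.mirror hte heq
    · exact generic_contra hl hc hb hconn h5 C htd hte

end Mg

theorem stmt5 {V E : Type} [Fintype V] [Fintype E] (ends : E → Sym2 V)
    (hl : Mg.NoLoops ends) (hc : Mg.IsCubic ends) (hb : Mg.Bridgeless ends)
    (hconn : Mg.Connected ends) (h5 : Mg.TwoFactorsAllC5 ends) :
    ¬ ∃ (c : ZMod 4 → V) (f : ZMod 4 → E) (c' : ZMod 3 → V) (f' : ZMod 3 → E),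
      (Function.Injective c ∧ Function.Injective f ∧
        ∀ i, ends (f i) = s(c i, c (i + 1))) ∧
      (Function.Injective c' ∧ Function.Injective f' ∧
        ∀ i, ends (f' i) = s(c' i, c' (i + 1))) ∧
      (Set.range f ∩ Set.range f').Nonempty := by
  rintro ⟨c, f, c', f', ⟨hcinj, hfinj, hcf⟩, ⟨hc'inj, hf'inj, hc'f⟩, x, hxf, hxf'⟩
  obtain ⟨i, hi⟩ := hxf
  obtain ⟨j, hj⟩ := hxf'
  have hij : f' j = f i := hj.trans hi.symm
  -- distinctness helpers
  have hz4 : ∀ k l : ZMod 4, k ≠ l → c (i + k) ≠ c (i + l) := by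
    intro k l hkl h
    exact hkl (add_left_cancel (hcinj h))
  have hf4 : ∀ k l : ZMod 4, k ≠ l → f (i + k) ≠ f (i + l) := by
    intro k l hkl h
    exact hkl (add_left_cancel (hfinj h))
  have hz3 : ∀ k l : ZMod 3, k ≠ l → c' (j + k) ≠ c' (j + l) := by
    intro k l hkl h
    exact hkl (add_left_cancel (hc'inj h))
  have hf3 : ∀ k l : ZMod 3, k ≠ l → f' (j + k) ≠ f' (j + l) := by
    intro k l hkl h
    exact hkl (add_left_cancel (hf'inj h))
  -- incidence rewrites
  have hsq1 : ends (f (i+1)) = s(c (i+1), c (i+2)) := by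
    have h := hcf (i+1)
    rwa [show i+1+1 = i+2 from by ring] at h
  have hsq2 : ends (f (i+2)) = s(c (i+2), c (i+3)) := by
    have h := hcf (i+2)
    rwa [show i+2+1 = i+3 from by ring] at h
  have hsq3 : ends (f (i+3)) = s(c (i+3), c i) := by
    have h := hcf (i+3)
    rwa [show i+3+1 = i from by
      have h4 : (3 : ZMod 4) + 1 = 0 := by decide
      calc i+3+1 = i + (3+1) := by ring
        _ = i + 0 := by rw [h4]
        _ = i := add_zero i] at h
  have htr1 : ends (f' (j+1)) = s(c' (j+1), c' (j+2)) := by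
    have h := hc'f (j+1)
    rwa [show j+1+1 = j+2 from by ring] at h
  have htr2 : ends (f' (j+2)) = s(c' (j+2), c' j) := by
    have h := hc'f (j+2)
    rwa [show j+2+1 = j from by
      have h3 : (2 : ZMod 3) + 1 = 0 := by decide
      calc j+2+1 = j + (2+1) := by ring
        _ = j + 0 := by rw [h3]
        _ = j := add_zero j] at h
  have hkey : s(c i, c (i+1)) = s(c' j, c' (j+1)) := by
    rw [← hcf i, ← hij, hc'f j]
  rcases Sym2.eq_iff.mp hkey with ⟨hA, hB⟩ | ⟨hA, hB⟩
  · refine Mg.cfg_contra hl hc hb hconn h5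
      { a := c i, b := c (i+1), t := c' (j+2), d := c (i+3), e := c (i+2),
        e0 := f i, e1 := f' (j+1), e2 := f' (j+2),
        g1 := f (i+1), g2 := f (i+2), g3 := f (i+3),
        h0 := hcf i
        h1 := by rw [htr1, ← hB]
        h2 := by rw [htr2, ← hA]
        hg1 := hsq1
        hg2 := hsq2
        hg3 := hsq3
        vab := by have h := hz4 0 1 (by decide); rwa [add_zero] at h
        vat := by rw [hA]; have h := hz3 0 2 (by decide); rwa [add_zero] at h
        vbt := by rw [hB]; exact hz3 1 2 (by decide)
        vae := by have h := hz4 0 2 (by decide); rwa [add_zero] at h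
        vad := by have h := hz4 0 3 (by decide); rwa [add_zero] at h
        vbe := hz4 1 2 (by decide)
        vbd := hz4 1 3 (by decide)
        ved := hz4 2 3 (by decide)
        e01 := by rw [← hij]; have h := hf3 0 1 (by decide); rwa [add_zero] at h
        e02 := by rw [← hij]; have h := hf3 0 2 (by decide); rwa [add_zero] at h
        e12 := hf3 1 2 (by decide)
        e0g1 := by have h := hf4 0 1 (by decide); rwa [add_zero] at h
        e0g2 := by have h := hf4 0 2 (by decide); rwa [add_zero] at h
        e0g3 := by have h := hf4 0 3 (by decide); rwa [add_zero] at h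
        g12 := hf4 1 2 (by decide)
        g13 := hf4 1 3 (by decide)
        g23 := hf4 2 3 (by decide) }
  · refine Mg.cfg_contra hl hc hb hconn h5
      { a := c i, b := c (i+1), t := c' (j+2), d := c (i+3), e := c (i+2),
        e0 := f i, e1 := f' (j+2), e2 := f' (j+1),
        g1 := f (i+1), g2 := f (i+2), g3 := f (i+3),
        h0 := hcf i
        h1 := by rw [htr2, ← hB]; exact Sym2.eq_swap
        h2 := by rw [htr1, ← hA]; exact Sym2.eq_swap
        hg1 := hsq1
        hg2 := hsq2
        hg3 := hsq3
        vab := by have h := hz4 0 1 (by decide); rwa [add_zero] at h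
        vat := by rw [hA]; exact hz3 1 2 (by decide)
        vbt := by rw [hB]; have h := hz3 0 2 (by decide); rwa [add_zero] at h
        vae := by have h := hz4 0 2 (by decide); rwa [add_zero] at h
        vad := by have h := hz4 0 3 (by decide); rwa [add_zero] at h
        vbe := hz4 1 2 (by decide)
        vbd := hz4 1 3 (by decide)
        ved := hz4 2 3 (by decide)
        e01 := by rw [← hij]; have h := hf3 0 2 (by decide); rwa [add_zero] at h
        e02 := by rw [← hij]; have h := hf3 0 1 (by decide); rwa [add_zero] at h
        e12 := (hf3 1 2 (by decide)).symm
        e0g1 := by have h := hf4 0 1 (by decide); rwa [add_zero] at h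
        e0g2 := by have h := hf4 0 2 (by decide); rwa [add_zero] at h
        e0g3 := by have h := hf4 0 3 (by decide); rwa [add_zero] at h
        g12 := hf4 1 2 (by decide)
        g13 := hf4 1 3 (by decide)
        g23 := hf4 2 3 (by decide) }
end

section
/- Let G be a cubic graph of girth at least five such that every path of length two in G is contained in at least two distinct 5-cycles. If G is connected, then G has exactly ten vertices. -/
/-- A 5-cycle in a simple graph, given by an injective map from `ZMod 5`. -/
def IsC5 {V : Type} (G : SimpleGraph V) (c : ZMod 5 → V) : Prop :=
  Function.Injective c ∧ ∀ i, G.Adj (c i) (c (i + 1))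

/-- The edge set of a 5-cycle. -/
def cEdges {V : Type} (c : ZMod 5 → V) : Set (Sym2 V) :=
  Set.range fun i : ZMod 5 => s(c i, c (i + 1))


section Aux
open SimpleGraph
lemma noCycleLt5 {V : Type} (G : SimpleGraph V) (hgirth : 5 ≤ G.girth)
    {a : V} (w : G.Walk a a) (hw : w.IsCycle) : 5 ≤ w.length := by
  have hna : ¬ G.IsAcyclic := fun h => h _ hw
  have h1 : G.egirth ≠ ⊤ := by simpa using hna
  have h2 : (5 : ℕ∞) ≤ G.egirth := by
    rw [← ENat.coe_toNat h1]
    exact_mod_cast hgirth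
  have := SimpleGraph.le_egirth.mp h2 a w hw
  exact_mod_cast this

lemma no3 {V : Type} (G : SimpleGraph V) (hgirth : 5 ≤ G.girth)
    {a b c : V} (hab : G.Adj a b) (hbc : G.Adj b c) (hca : G.Adj c a) : False := by
  have := noCycleLt5 G hgirth (.cons hab (.cons hbc (.cons hca .nil))) (by
    simp [Walk.isCycle_def, Walk.isTrail_def, hab.ne, hbc.ne, hca.ne, hab.ne', hbc.ne', hca.ne'])
  simp at this

lemma no4 {V : Type} (G : SimpleGraph V) (hgirth : 5 ≤ G.girth)
    {a b c d : V} (hab : G.Adj a b) (hbc : G.Adj b c) (hcd : G.Adj c d) (hda : G.Adj d a)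
    (hac : a ≠ c) (hbd : b ≠ d) : False := by
  have := noCycleLt5 G hgirth (.cons hab (.cons hbc (.cons hcd (.cons hda .nil)))) (by
    simp [Walk.isCycle_def, Walk.isTrail_def, hab.ne, hbc.ne, hcd.ne, hda.ne,
      hab.ne', hbc.ne', hcd.ne', hda.ne', hac, hbd, hac.symm, hbd.symm, Sym2.eq_iff])
  simp at this

lemma extract {V : Type} (G : SimpleGraph V) {c : ZMod 5 → V} (hc : IsC5 G c)
    {v a x : V} (hvx : v ≠ x)
    (hva : s(v,a) ∈ cEdges c) (hax : s(a,x) ∈ cEdges c) :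
    ∃ p q : V, G.Adj x p ∧ G.Adj p q ∧ G.Adj q v ∧ p ≠ v ∧ p ≠ a ∧ q ≠ a ∧ q ≠ v ∧
      cEdges c = {s(v,a), s(a,x), s(x,p), s(p,q), s(q,v)} := by
  obtain ⟨j, hj⟩ := hva
  obtain ⟨k, hk⟩ := hax
  rw [Sym2.eq_iff] at hj hk
  -- find i with c i = a and v at i+1 or i+4
  obtain ⟨i, ha, hv⟩ : ∃ i, c i = a ∧ (c (i + 1) = v ∨ c (i + 4) = v) := by
    rcases hj with ⟨h1, h2⟩ | ⟨h1, h2⟩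
    · exact ⟨j + 1, h2, Or.inr (by
        rw [add_assoc, show (1:ZMod 5)+4 = 0 from by decide, add_zero, h1])⟩
    · exact ⟨j, h1, Or.inl h2⟩
  -- x at i+1 or i+4
  have hx : c (i + 1) = x ∨ c (i + 4) = x := by
    rcases hk with ⟨h1, h2⟩ | ⟨h1, h2⟩
    · have : k = i := hc.1 (h1.trans ha.symm)
      exact Or.inl (by rw [← this]; exact h2)
    · have : k + 1 = i := hc.1 (h2.trans ha.symm)
      exact Or.inr (by
        rw [show i + 4 = k from by
          rw [← this, add_assoc, show (1:ZMod 5)+4 = 0 from by decide, add_zero]]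
        exact h1)
  have hne : ∀ (d e : ZMod 5), d ≠ e → c (i + d) ≠ c (i + e) := by
    intro d e hde h
    exact hde (add_left_cancel (hc.1 h))
  have hall : ∀ j : ZMod 5, j = i + 0 ∨ j = i + 1 ∨ j = i + 2 ∨ j = i + 3 ∨ j = i + 4 := by
    intro j
    have h5 : ∀ d : ZMod 5, d = 0 ∨ d = 1 ∨ d = 2 ∨ d = 3 ∨ d = 4 := by decide
    rcases h5 (j - i) with h|h|h|h|h
    · left; rw [← h]; ring
    · right; left; rw [← h]; ring
    · right; right; left; rw [← h]; ring
    · right; right; right; left; rw [← h]; ring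
    · right; right; right; right; rw [← h]; ring
  have e1 : i + 1 + 1 = i + 2 := by ring
  have e2 : i + 2 + 1 = i + 3 := by ring
  have e3 : i + 3 + 1 = i + 4 := by ring
  have e4 : i + 4 + 1 = i + 0 := by rw [add_assoc, show (4:ZMod 5)+1 = 0 from by decide]
  have e0 : i + 0 = i := by ring
  have adj : ∀ d : ZMod 5, G.Adj (c (i + d)) (c (i + d + 1)) := fun d => hc.2 (i + d)
  rcases hv with hv | hv
  · -- v = c (i+1), so x = c (i+4) (since v ≠ x); p = c(i+3), q = c(i+2)
    have hx' : c (i + 4) = x := by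
      rcases hx with hx | hx
      · exact absurd (hv.symm.trans hx) hvx
      · exact hx
    refine ⟨c (i + 3), c (i + 2), ?_, ?_, ?_, ?_, ?_, ?_, ?_, ?_⟩
    · rw [← hx']; have h := adj 3; rw [e3] at h; exact h.symm
    · have h := adj 2; rw [e2] at h; exact h.symm
    · rw [← hv]; have h := adj 1; rw [e1] at h; exact h.symm
    · rw [← hv]; exact hne 3 1 (by decide)
    · rw [← ha]; have h := hne 3 0 (by decide); rw [e0] at h; exact h
    · rw [← ha]; have h := hne 2 0 (by decide); rw [e0] at h; exact h
    · rw [← hv]; exact hne 2 1 (by decide)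
    · ext e
      simp only [cEdges, Set.mem_range, Set.mem_insert_iff, Set.mem_singleton_iff]
      constructor
      · rintro ⟨j, rfl⟩
        rcases hall j with rfl|rfl|rfl|rfl|rfl <;>
          simp [e0, e1, e2, e3, e4, ha, hv, hx', Sym2.eq_iff] 
      · rintro (rfl|rfl|rfl|rfl|rfl)
        · exact ⟨i + 0, by simp [e0, ha, hv, Sym2.eq_swap]⟩
        · exact ⟨i + 4, by simp [e4, e0, ha, hx', Sym2.eq_swap]⟩
        · exact ⟨i + 3, by simp [e3, hx', Sym2.eq_swap]⟩
        · exact ⟨i + 2, by simp [e2, Sym2.eq_swap]⟩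
        · exact ⟨i + 1, by simp [e1, hv, Sym2.eq_swap]⟩
  · -- v = c (i+4), so x = c (i+1); p = c(i+2), q = c(i+3)
    have hx' : c (i + 1) = x := by
      rcases hx with hx | hx
      · exact hx
      · exact absurd (hv.symm.trans hx) hvx
    refine ⟨c (i + 2), c (i + 3), ?_, ?_, ?_, ?_, ?_, ?_, ?_, ?_⟩
    · rw [← hx', ← e1]; exact adj 1
    · rw [← e2]; exact adj 2
    · rw [← hv, ← e3]; exact adj 3
    · rw [← hv]; exact hne 2 4 (by decide)
    · rw [← ha]; have h := hne 2 0 (by decide); rw [e0] at h; exact h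
    · rw [← ha]; have h := hne 3 0 (by decide); rw [e0] at h; exact h
    · rw [← hv]; exact hne 3 4 (by decide)
    · ext e
      simp only [cEdges, Set.mem_range, Set.mem_insert_iff, Set.mem_singleton_iff]
      constructor
      · rintro ⟨j, rfl⟩
        rcases hall j with rfl|rfl|rfl|rfl|rfl <;>
          simp [e0, e1, e2, e3, e4, ha, hv, hx', Sym2.eq_iff] 
      · rintro (rfl|rfl|rfl|rfl|rfl)
        · exact ⟨i + 4, by simp [e4, e0, ha, hv]⟩
        · exact ⟨i + 0, by simp [e0, e1, ha, hx']⟩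
        · exact ⟨i + 1, by simp [e1, hx']⟩
        · exact ⟨i + 2, by simp [e2]⟩
        · exact ⟨i + 3, by simp [e3, hv]⟩

end Aux

theorem stmt15 {V : Type} [Fintype V] (G : SimpleGraph V) [DecidableRel G.Adj]
    (hcubic : G.IsRegularOfDegree 3) (hgirth : 5 ≤ G.girth)
    (h2 : ∀ u v w : V, G.Adj u v → G.Adj v w → u ≠ w →
      ∃ c c' : ZMod 5 → V, IsC5 G c ∧ IsC5 G c' ∧
        s(u, v) ∈ cEdges c ∧ s(v, w) ∈ cEdges c ∧
        s(u, v) ∈ cEdges c' ∧ s(v, w) ∈ cEdges c' ∧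
        cEdges c ≠ cEdges c')
    (hconn : G.Connected) : Fintype.card V = 10 := by
  classical
  obtain ⟨v₀⟩ := hconn.nonempty
  set N1 : Finset V := G.neighborFinset v₀ with hN1def
  set N2 : Finset V := N1.biUnion (fun a => G.neighborFinset a \ {v₀}) with hN2def
  set B : Finset V := insert v₀ (N1 ∪ N2) with hBdef
  have hdeg : ∀ v : V, (G.neighborFinset v).card = 3 := fun v => hcubic v
  have hmemN1 : ∀ z, z ∈ N1 ↔ G.Adj v₀ z := by
    intro z; rw [hN1def, SimpleGraph.mem_neighborFinset]
  have hmemN2 : ∀ z, z ∈ N2 ↔ ∃ a, G.Adj v₀ a ∧ G.Adj a z ∧ z ≠ v₀ := by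
    intro z
    rw [hN2def]
    simp only [Finset.mem_biUnion, Finset.mem_sdiff, SimpleGraph.mem_neighborFinset,
      Finset.mem_singleton]
    constructor
    · rintro ⟨a, ha, haz, hzv⟩
      exact ⟨a, (hmemN1 a).mp ha, haz, hzv⟩
    · rintro ⟨a, ha, haz, hzv⟩
      exact ⟨a, (hmemN1 a).mpr ha, haz, hzv⟩
  have closure : ∀ x ∈ B, ∀ y, G.Adj x y → y ∈ B := by
    intro x hx y hxy
    rw [hBdef, Finset.mem_insert, Finset.mem_union] at hx ⊢
    rcases hx with rfl | hx | hx
    · exact Or.inr (Or.inl ((hmemN1 y).mpr hxy))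
    · by_cases hy : y = v₀
      · exact Or.inl hy
      · exact Or.inr (Or.inr ((hmemN2 y).mpr ⟨x, (hmemN1 x).mp hx, hxy, hy⟩))
    · obtain ⟨a, hva, hax, hxv⟩ := (hmemN2 x).mp hx
      have hvx : v₀ ≠ x := Ne.symm hxv
      obtain ⟨c, c', hc, hc', m1, m2, m3, m4, hEdist⟩ := h2 v₀ a x hva hax hvx
      obtain ⟨p, q, hxp, hpq, hqv, hpv, hpa, hqa, hqv0, hE⟩ := extract G hc hvx m1 m2
      obtain ⟨p', q', hxp', hpq', hqv', hpv', hpa', hqa', hqv0', hE'⟩ := extract G hc' hvx m3 m4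
      have hpp' : p ≠ p' := by
        rintro rfl
        by_cases hqq : q = q'
        · subst hqq
          exact hEdist (hE.trans hE'.symm)
        · exact no4 G hgirth hqv.symm hpq.symm hpq' hqv' (fun h => hpv h.symm) hqq
      have hsub : ({a, p, p'} : Finset V) ⊆ G.neighborFinset x := by
        intro z hz
        rw [SimpleGraph.mem_neighborFinset]
        simp only [Finset.mem_insert, Finset.mem_singleton] at hz
        rcases hz with rfl | rfl | rfl
        · exact hax.symm
        · exact hxp
        · exact hxp'
      have hcard3 : ({a, p, p'} : Finset V).card = 3 := by
        rw [Finset.card_insert_of_notMem (by simp [Ne.symm hpa, Ne.symm hpa']),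
          Finset.card_insert_of_notMem (by simp [hpp']), Finset.card_singleton]
      have heq : G.neighborFinset x = ({a, p, p'} : Finset V) :=
        (Finset.eq_of_subset_of_card_le hsub (by rw [hdeg x, hcard3])).symm
      have hy : y ∈ ({a, p, p'} : Finset V) := by
        rw [← heq, SimpleGraph.mem_neighborFinset]; exact hxy
      simp only [Finset.mem_insert, Finset.mem_singleton] at hy
      rcases hy with rfl | rfl | rfl
      · exact Or.inr (Or.inl ((hmemN1 y).mpr hva))
      · exact Or.inr (Or.inr ((hmemN2 y).mpr ⟨q, hqv.symm, hpq.symm, hpv⟩))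
      · exact Or.inr (Or.inr ((hmemN2 y).mpr ⟨q', hqv'.symm, hpq'.symm, hpv'⟩))
  have hball : ∀ y, y ∈ B := by
    have key : ∀ (x y : V) (_ : G.Walk x y), x ∈ B → y ∈ B := by
      intro x y w
      induction w with
      | nil => exact id
      | cons h p ih => intro hx; exact ih (closure _ hx _ h)
    intro y
    obtain ⟨w⟩ := hconn v₀ y
    exact key v₀ y w (by rw [hBdef]; exact Finset.mem_insert_self _ _)
  have hBuniv : B = Finset.univ := Finset.eq_univ_of_forall hball
  have hv₀N1 : v₀ ∉ N1 := by
    rw [hmemN1]; exact G.irrefl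
  have hv₀N2 : v₀ ∉ N2 := by
    rw [hmemN2]; rintro ⟨a, -, -, h⟩; exact h rfl
  have hN1N2 : Disjoint N1 N2 := by
    rw [Finset.disjoint_left]
    intro z hz1 hz2
    obtain ⟨a, hva, haz, -⟩ := (hmemN2 z).mp hz2
    exact no3 G hgirth hva haz ((hmemN1 z).mp hz1).symm
  have hN1card : N1.card = 3 := hdeg v₀
  have hN2card : N2.card = 6 := by
    rw [hN2def, Finset.card_biUnion]
    · have hc2 : ∀ a ∈ N1, (G.neighborFinset a \ {v₀}).card = 2 := by
        intro a ha
        rw [Finset.card_sdiff_of_subset (by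
          simp only [Finset.singleton_subset_iff, SimpleGraph.mem_neighborFinset]
          exact ((hmemN1 a).mp ha).symm)]
        rw [hdeg, Finset.card_singleton]
      rw [Finset.sum_congr rfl hc2, Finset.sum_const, hN1card]; rfl
    · intro a ha b hb hab
      rw [Function.onFun, Finset.disjoint_left]
      intro z hza hzb
      simp only [Finset.mem_sdiff, SimpleGraph.mem_neighborFinset, Finset.mem_singleton] at hza hzb
      exact no4 G hgirth ((hmemN1 a).mp ha) hza.1 hzb.1.symm ((hmemN1 b).mp hb).symm
        (fun h => hza.2 h.symm) hab
  have hBcard : B.card = 10 := by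
    rw [hBdef, Finset.card_insert_of_notMem (by
      rw [Finset.mem_union]; rintro (h | h); exacts [hv₀N1 h, hv₀N2 h]),
      Finset.card_union_of_disjoint hN1N2, hN1card, hN2card]
  rw [← Finset.card_univ, ← hBuniv, hBcard]
end
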